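/- arXiv:math/9903052 — 7 statements merged into one kernel-verified Lean document; each statement's English description precedes it below -/
import Mathlib

section
/- In Cl(𝔤), the element γ = −(1/6) Σ_{a,b,c} f_{abc} x_a x_b x_c squares to a scalar: γ·γ = −(1/48)·(Σ_{a,b,c} f_{abc}²)·1. -/
namespace GammaSqAux
variable {n : ℕ} {A : Type*} [Ring A] [Algebra ℝ A]


def Sc (x : Fin n → A) (f : Fin n → Fin n → Fin n → ℝ) : A :=
  ∑ a, ∑ b, ∑ c, f a b c • (x a * (x b * x c))

def Gq (x : Fin n → A) (f : Fin n → Fin n → Fin n → ℝ) (d : Fin n) : A :=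
  ∑ r, ∑ s, f d r s • (x r * x s)

def Nc (f : Fin n → Fin n → Fin n → ℝ) (r s u v : Fin n) : ℝ :=
  ∑ a, f a r s * f a u v

variable (x : Fin n → A) (f : Fin n → Fin n → Fin n → ℝ)

theorem swap3 (hsw : ∀ a b, x a * x b = (if a = b then (1:ℝ) else 0) • (1:A) - x b * x a)
    (a b : Fin n) (y : A) :
    x a * (x b * y) = (if a = b then (1:ℝ) else 0) • y - x b * (x a * y) := by
  rw [← mul_assoc, hsw a b, sub_mul, smul_mul_assoc, one_mul, mul_assoc]

theorem P3 (hsw : ∀ a b, x a * x b = (if a = b then (1:ℝ) else 0) • (1:A) - x b * x a)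
    (d a b c : Fin n) :
    x d * (x a * (x b * x c)) =
      (if d = a then (1:ℝ) else 0) • (x b * x c)
      - (if d = b then (1:ℝ) else 0) • (x a * x c)
      + (if d = c then (1:ℝ) else 0) • (x a * x b)
      - x a * (x b * (x c * x d)) := by
  rw [swap3 x hsw d a, swap3 x hsw d b, hsw d c]
  simp only [mul_sub, mul_smul_comm, mul_one, sub_mul, smul_mul_assoc, one_mul]
  module

theorem L1 (hsw : ∀ a b, x a * x b = (if a = b then (1:ℝ) else 0) • (1:A) - x b * x a)
    (hf1 : ∀ a b c, f b a c = -f a b c) (hc : ∀ a b c, f a b c = f b c a) (d : Fin n) :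
    x d * Sc x f + Sc x f * x d = (3:ℝ) • Gq x f d := by
  have e1 : x d * Sc x f + Sc x f * x d
      = ∑ a, ∑ b, ∑ c, f a b c • ((if d = a then (1:ℝ) else 0) • (x b * x c)
          - (if d = b then (1:ℝ) else 0) • (x a * x c)
          + (if d = c then (1:ℝ) else 0) • (x a * x b)) := by
    rw [Sc]
    simp only [Finset.mul_sum, Finset.sum_mul, mul_smul_comm, smul_mul_assoc,
      ← Finset.sum_add_distrib]
    refine Finset.sum_congr rfl fun a _ => Finset.sum_congr rfl fun b _ =>
      Finset.sum_congr rfl fun c _ => ?_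
    rw [P3 x hsw d a b c,
      show x a * (x b * x c) * x d = x a * (x b * (x c * x d)) by rw [mul_assoc, mul_assoc]]
    module
  have hA : ∑ a, ∑ b, ∑ c, (f a b c * if d = a then (1:ℝ) else 0) • (x b * x c)
      = Gq x f d := by
    simp [Gq, mul_ite, mul_one, mul_zero, ite_smul, zero_smul, Finset.sum_ite_irrel,
      Finset.sum_const_zero, Finset.sum_ite_eq]
  have hB : ∑ a, ∑ b, ∑ c, (f a b c * if d = b then (1:ℝ) else 0) • (x a * x c)
      = -Gq x f d := by
    rw [Finset.sum_comm]
    simp only [mul_ite, mul_one, mul_zero, ite_smul, zero_smul, Finset.sum_ite_irrel,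
      Finset.sum_const_zero, Finset.sum_ite_eq, Finset.mem_univ, if_true]
    rw [Gq, ← Finset.sum_neg_distrib]
    refine Finset.sum_congr rfl fun a _ => ?_
    rw [← Finset.sum_neg_distrib]
    refine Finset.sum_congr rfl fun c _ => ?_
    rw [hf1 d a c, neg_smul]
  have hC : ∑ a, ∑ b, ∑ c, (f a b c * if d = c then (1:ℝ) else 0) • (x a * x b)
      = Gq x f d := by
    simp only [mul_ite, mul_one, mul_zero, ite_smul, zero_smul, Finset.sum_ite_irrel,
      Finset.sum_const_zero, Finset.sum_ite_eq, Finset.mem_univ, if_true]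
    rw [Gq]
    refine Finset.sum_congr rfl fun a _ => Finset.sum_congr rfl fun b _ => ?_
    rw [show f a b d = f d a b by rw [hc a b d, hc b d a]]
  calc x d * Sc x f + Sc x f * x d
      = (∑ a, ∑ b, ∑ c, (f a b c * if d = a then (1:ℝ) else 0) • (x b * x c))
        - (∑ a, ∑ b, ∑ c, (f a b c * if d = b then (1:ℝ) else 0) • (x a * x c))
        + (∑ a, ∑ b, ∑ c, (f a b c * if d = c then (1:ℝ) else 0) • (x a * x b)) := by
        rw [e1]
        simp only [smul_sub, smul_add, smul_smul, Finset.sum_sub_distrib, Finset.sum_add_distrib]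
    _ = Gq x f d - (-Gq x f d) + Gq x f d := by rw [hA, hB, hC]
    _ = (3:ℝ) • Gq x f d := by module

theorem L2 (hsw : ∀ a b, x a * x b = (if a = b then (1:ℝ) else 0) • (1:A) - x b * x a)
    (hf2 : ∀ a b c, f a c b = -f a b c) (d b : Fin n) :
    x b * Gq x f d = Gq x f d * x b + (2:ℝ) • ∑ r, f d b r • x r := by
  have key : ∀ r s, x b * (x r * x s) =
      (if b = r then (1:ℝ) else 0) • x s - (if b = s then (1:ℝ) else 0) • x r
      + (x r * x s) * x b := by
    intro r s
    rw [swap3 x hsw b r, hsw b s,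
      show x r * x s * x b = x r * (x s * x b) from mul_assoc _ _ _]
    simp only [mul_sub, mul_smul_comm, mul_one]
    module
  have e1 : x b * Gq x f d = (∑ r, ∑ s, (f d r s * if b = r then (1:ℝ) else 0) • x s)
      - (∑ r, ∑ s, (f d r s * if b = s then (1:ℝ) else 0) • x r) + Gq x f d * x b := by
    rw [Gq]
    simp only [Finset.mul_sum, Finset.sum_mul, mul_smul_comm, smul_mul_assoc]
    simp only [key, smul_sub, smul_add, smul_smul, Finset.sum_sub_distrib,
      Finset.sum_add_distrib]
  have hA : (∑ r, ∑ s, (f d r s * if b = r then (1:ℝ) else 0) • x s) = ∑ s, f d b s • x s := by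
    simp [mul_ite, ite_smul, Finset.sum_ite_irrel, Finset.sum_ite_eq]
  have hB : (∑ r, ∑ s, (f d r s * if b = s then (1:ℝ) else 0) • x r)
      = -∑ r, f d b r • x r := by
    simp only [mul_ite, mul_one, mul_zero, ite_smul, zero_smul, Finset.sum_ite_eq,
      Finset.mem_univ, if_true, ← Finset.sum_neg_distrib]
    refine Finset.sum_congr rfl fun r _ => ?_
    rw [hf2 d b r, neg_smul]
  rw [e1, hA, hB]
  module


theorem LsymK (hsw : ∀ a b, x a * x b = (if a = b then (1:ℝ) else 0) • (1:A) - x b * x a)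
    (K : Fin n → Fin n → ℝ) (hK : ∀ u v, K u v = K v u) :
    ∑ u, ∑ v, K u v • (x u * x v) = algebraMap ℝ A ((1/2) * ∑ u, K u u) := by
  have flip : (∑ u, ∑ v, K u v • (x u * x v)) = ∑ u, ∑ v, K u v • (x v * x u) := by
    rw [Finset.sum_comm]
    exact Finset.sum_congr rfl fun u _ => Finset.sum_congr rfl fun v _ => by rw [hK u v]
  have h2 : (∑ u, ∑ v, K u v • (x u * x v)) + (∑ u, ∑ v, K u v • (x u * x v))
      = algebraMap ℝ A (∑ u, K u u) := by
    nth_rewrite 2 [flip]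
    rw [← Finset.sum_add_distrib]
    calc ∑ u, ((∑ v, K u v • (x u * x v)) + ∑ v, K u v • (x v * x u))
        = ∑ u, ∑ v, (K u v * if u = v then (1:ℝ) else 0) • (1:A) := by
          refine Finset.sum_congr rfl fun u _ => ?_
          rw [← Finset.sum_add_distrib]
          refine Finset.sum_congr rfl fun v _ => ?_
          rw [← smul_add, hsw u v, sub_add_cancel, smul_smul]
      _ = ∑ u, K u u • (1:A) := by
          simp [mul_ite, ite_smul, Finset.sum_ite_eq]
      _ = algebraMap ℝ A (∑ u, K u u) := by
          rw [← Finset.sum_smul, Algebra.algebraMap_eq_smul_one]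
  calc ∑ u, ∑ v, K u v • (x u * x v)
      = (2⁻¹ : ℝ) • ((∑ u, ∑ v, K u v • (x u * x v)) + (∑ u, ∑ v, K u v • (x u * x v))) := by
        rw [← two_smul ℝ, smul_smul]; norm_num
    _ = (2⁻¹ : ℝ) • algebraMap ℝ A (∑ u, K u u) := by rw [h2]
    _ = algebraMap ℝ A ((1/2) * ∑ u, K u u) := by
        rw [Algebra.smul_def, ← map_mul]; norm_num


theorem collect24 (T : Fin n → Fin n → Fin n → Fin n → ℝ) (m : Fin n → Fin n → A) :
    ∑ a, ∑ b, ∑ c, ∑ r, (T a b c r) • m b r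
      = ∑ b, ∑ r, (∑ a, ∑ c, T a b c r) • m b r := by
  calc ∑ a, ∑ b, ∑ c, ∑ r, (T a b c r) • m b r
      = ∑ b, ∑ a, ∑ c, ∑ r, (T a b c r) • m b r := Finset.sum_comm
    _ = ∑ b, ∑ a, ∑ r, ∑ c, (T a b c r) • m b r :=
        Finset.sum_congr rfl fun b _ => Finset.sum_congr rfl fun a _ => Finset.sum_comm
    _ = ∑ b, ∑ r, ∑ a, ∑ c, (T a b c r) • m b r :=
        Finset.sum_congr rfl fun b _ => Finset.sum_comm
    _ = ∑ b, ∑ r, (∑ a, ∑ c, T a b c r) • m b r := by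
        refine Finset.sum_congr rfl fun b _ => Finset.sum_congr rfl fun r _ => ?_
        rw [Finset.sum_smul]
        exact Finset.sum_congr rfl fun a _ => by rw [Finset.sum_smul]

theorem collect14 (T : Fin n → Fin n → Fin n → Fin n → ℝ) (m : Fin n → Fin n → A) :
    ∑ a, ∑ b, ∑ c, ∑ r, (T a b c r) • m a r
      = ∑ a, ∑ r, (∑ b, ∑ c, T a b c r) • m a r := by
  refine Finset.sum_congr rfl fun a _ => ?_
  calc ∑ b, ∑ c, ∑ r, (T a b c r) • m a r
      = ∑ b, ∑ r, ∑ c, (T a b c r) • m a r :=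
        Finset.sum_congr rfl fun b _ => Finset.sum_comm
    _ = ∑ r, ∑ b, ∑ c, (T a b c r) • m a r := Finset.sum_comm
    _ = ∑ r, (∑ b, ∑ c, T a b c r) • m a r := by
        refine Finset.sum_congr rfl fun r _ => ?_
        rw [Finset.sum_smul]
        exact Finset.sum_congr rfl fun b _ => by rw [Finset.sum_smul]

theorem collect34 (T : Fin n → Fin n → Fin n → Fin n → ℝ) (m : Fin n → Fin n → A) :
    ∑ a, ∑ b, ∑ c, ∑ r, (T a b c r) • m c r
      = ∑ c, ∑ r, (∑ a, ∑ b, T a b c r) • m c r := by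
  calc ∑ a, ∑ b, ∑ c, ∑ r, (T a b c r) • m c r
      = ∑ a, ∑ c, ∑ b, ∑ r, (T a b c r) • m c r :=
        Finset.sum_congr rfl fun a _ => Finset.sum_comm
    _ = ∑ c, ∑ a, ∑ b, ∑ r, (T a b c r) • m c r := Finset.sum_comm
    _ = ∑ c, ∑ a, ∑ r, ∑ b, (T a b c r) • m c r :=
        Finset.sum_congr rfl fun c _ => Finset.sum_congr rfl fun a _ => Finset.sum_comm
    _ = ∑ c, ∑ r, ∑ a, ∑ b, (T a b c r) • m c r :=
        Finset.sum_congr rfl fun c _ => Finset.sum_comm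
    _ = ∑ c, ∑ r, (∑ a, ∑ b, T a b c r) • m c r := by
        refine Finset.sum_congr rfl fun c _ => Finset.sum_congr rfl fun r _ => ?_
        rw [Finset.sum_smul]
        exact Finset.sum_congr rfl fun a _ => by rw [Finset.sum_smul]


theorem LGG (hsw : ∀ a b, x a * x b = (if a = b then (1:ℝ) else 0) • (1:A) - x b * x a)
    (hf2 : ∀ a b c, f a c b = -f a b c)
    (hJ : ∀ r s u v, Nc f r s u v = -Nc f s u r v - Nc f u r s v) :
    ∑ a, Gq x f a * Gq x f a
      = algebraMap ℝ A (-(1/2) * ∑ a, ∑ b, ∑ c, (f a b c)^2) := by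
  have haa : ∀ e a, f e a a = 0 := fun e a => by have := hf2 e a a; linarith
  -- the main quartic expression and its pieces
  set E : A := ∑ r, ∑ s, ∑ u, ∑ v, Nc f r s u v • (x r * (x s * (x u * x v))) with hEdef
  set C3 : A := ∑ r, ∑ s, ∑ v, Nc f r s s v • (x r * x v) with hC3def
  set X : A := ∑ r, ∑ s, ∑ u, ∑ v, Nc f r s u v • (x r * (x u * (x s * x v))) with hXdef
  set X1 : A := ∑ r, ∑ s, ∑ u, ∑ v, Nc f s u r v • (x r * (x u * (x s * x v))) with hX1def
  set X2 : A := ∑ r, ∑ s, ∑ u, ∑ v, Nc f u r s v • (x r * (x u * (x s * x v))) with hX2def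
  -- step 0 : ∑ G a ^2 = E
  have step0 : ∑ a, Gq x f a * Gq x f a = E := by
    have expand : ∀ a, Gq x f a * Gq x f a
        = ∑ r, ∑ s, ∑ u, ∑ v, (f a r s * f a u v) • (x r * (x s * (x u * x v))) := by
      intro a
      rw [Gq, Finset.sum_mul]
      refine Finset.sum_congr rfl fun r _ => ?_
      rw [Finset.sum_mul]
      refine Finset.sum_congr rfl fun s _ => ?_
      rw [smul_mul_assoc, Finset.mul_sum, Finset.smul_sum]
      refine Finset.sum_congr rfl fun u _ => ?_
      rw [Finset.mul_sum, Finset.smul_sum]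
      refine Finset.sum_congr rfl fun v _ => ?_
      rw [mul_smul_comm, smul_smul, mul_assoc]
    rw [Finset.sum_congr rfl fun a _ => expand a, hEdef]
    calc ∑ a, ∑ r, ∑ s, ∑ u, ∑ v, (f a r s * f a u v) • (x r * (x s * (x u * x v)))
        = ∑ r, ∑ a, ∑ s, ∑ u, ∑ v, (f a r s * f a u v) • (x r * (x s * (x u * x v))) :=
          Finset.sum_comm
      _ = ∑ r, ∑ s, ∑ a, ∑ u, ∑ v, (f a r s * f a u v) • (x r * (x s * (x u * x v))) :=
          Finset.sum_congr rfl fun r _ => Finset.sum_comm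
      _ = ∑ r, ∑ s, ∑ u, ∑ a, ∑ v, (f a r s * f a u v) • (x r * (x s * (x u * x v))) :=
          Finset.sum_congr rfl fun r _ => Finset.sum_congr rfl fun s _ => Finset.sum_comm
      _ = ∑ r, ∑ s, ∑ u, ∑ v, ∑ a, (f a r s * f a u v) • (x r * (x s * (x u * x v))) :=
          Finset.sum_congr rfl fun r _ => Finset.sum_congr rfl fun s _ =>
            Finset.sum_congr rfl fun u _ => Finset.sum_comm
      _ = ∑ r, ∑ s, ∑ u, ∑ v, Nc f r s u v • (x r * (x s * (x u * x v))) := by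
          refine Finset.sum_congr rfl fun r _ => Finset.sum_congr rfl fun s _ =>
            Finset.sum_congr rfl fun u _ => Finset.sum_congr rfl fun v _ => ?_
          rw [Nc, Finset.sum_smul]
  -- step 1 : E = C3 - X
  have step1 : E = C3 - X := by
    rw [hEdef, hXdef, hC3def]
    calc ∑ r, ∑ s, ∑ u, ∑ v, Nc f r s u v • (x r * (x s * (x u * x v)))
        = (∑ r, ∑ s, ∑ u, ∑ v, (Nc f r s u v * if s = u then (1:ℝ) else 0) • (x r * x v))
          - ∑ r, ∑ s, ∑ u, ∑ v, Nc f r s u v • (x r * (x u * (x s * x v))) := by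
          rw [← Finset.sum_sub_distrib]
          refine Finset.sum_congr rfl fun r _ => ?_
          rw [← Finset.sum_sub_distrib]
          refine Finset.sum_congr rfl fun s _ => ?_
          rw [← Finset.sum_sub_distrib]
          refine Finset.sum_congr rfl fun u _ => ?_
          rw [← Finset.sum_sub_distrib]
          refine Finset.sum_congr rfl fun v _ => ?_
          rw [swap3 x hsw s u (x v), mul_sub, mul_smul_comm, smul_sub, smul_smul]
        _ = (∑ r, ∑ s, ∑ v, Nc f r s s v • (x r * x v))
          - ∑ r, ∑ s, ∑ u, ∑ v, Nc f r s u v • (x r * (x u * (x s * x v))) := by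
          congr 1
          simp [mul_ite, ite_smul, Finset.sum_ite_irrel, Finset.sum_ite_eq]
  -- step 2 : X = -X1 - X2
  have step2 : X = -X1 - X2 := by
    rw [hXdef, hX1def, hX2def]
    simp only [← Finset.sum_neg_distrib, ← Finset.sum_sub_distrib]
    refine Finset.sum_congr rfl fun r _ => Finset.sum_congr rfl fun s _ =>
      Finset.sum_congr rfl fun u _ => Finset.sum_congr rfl fun v _ => ?_
    rw [hJ r s u v, sub_smul, neg_smul]
  -- step 3 : X2 = -E
  have step3 : X2 = -E := by
    rw [hX2def, hEdef]
    calc ∑ r, ∑ s, ∑ u, ∑ v, Nc f u r s v • (x r * (x u * (x s * x v)))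
        = ∑ r, ∑ u, ∑ s, ∑ v, Nc f u r s v • (x r * (x u * (x s * x v))) :=
          Finset.sum_congr rfl fun r _ => Finset.sum_comm
      _ = ∑ u, ∑ r, ∑ s, ∑ v, Nc f u r s v • (x r * (x u * (x s * x v))) :=
          Finset.sum_comm
      _ = ∑ a, ∑ b, ∑ c, ∑ d, ((Nc f a b c d * if b = a then (1:ℝ) else 0) • (x c * x d)
            - Nc f a b c d • (x a * (x b * (x c * x d)))) := by
          refine Finset.sum_congr rfl fun a _ => Finset.sum_congr rfl fun b _ =>
            Finset.sum_congr rfl fun c _ => Finset.sum_congr rfl fun d _ => ?_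
          rw [swap3 x hsw b a (x c * x d), smul_sub, smul_smul]
      _ = -E := by
          simp only [Finset.sum_sub_distrib]
          have hzero : ∑ a, ∑ b, ∑ c, ∑ d,
              (Nc f a b c d * if b = a then (1:ℝ) else 0) • (x c * x d) = 0 := by
            have hN0 : ∀ a c d, Nc f a a c d = 0 := by
              intro a c d; rw [Nc]; simp [haa]
            simp only [mul_ite, mul_one, mul_zero, ite_smul, zero_smul,
              Finset.sum_ite_irrel, Finset.sum_const_zero, Finset.sum_ite_eq',
              Finset.mem_univ, if_true]
            simp [hN0]
          rw [hzero, zero_sub, hEdef]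
  -- pointwise quartic reduction for X1
  have Q3 : ∀ a b c d : Fin n, x c * (x b * (x a * x d)) =
      (if c = b then (1:ℝ) else 0) • (x a * x d)
      - (if c = a then (1:ℝ) else 0) • (x b * x d)
      + (if b = a then (1:ℝ) else 0) • (x c * x d)
      - x a * (x b * (x c * x d)) := by
    intro a b c d
    rw [swap3 x hsw c b (x a * x d), swap3 x hsw c a (x d)]
    simp only [mul_sub, mul_smul_comm]
    rw [swap3 x hsw b a (x c * x d)]
    module
  have hNs : ∀ r s u v, Nc f s r u v = -Nc f r s u v := by
    intro r s u v
    rw [Nc, Nc, ← Finset.sum_neg_distrib]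
    refine Finset.sum_congr rfl fun a _ => ?_
    rw [hf2 a r s]; ring
  -- step 4 : X1 = C3 + C3 - E
  have step4 : X1 = C3 + C3 - E := by
    rw [hX1def]
    have p1 : ∑ a, ∑ b, ∑ c, ∑ d,
        (Nc f a b c d * if c = b then (1:ℝ) else 0) • (x a * x d) = C3 := by
      simp only [mul_ite, mul_one, mul_zero, ite_smul, zero_smul, Finset.sum_ite_irrel,
        Finset.sum_const_zero, Finset.sum_ite_eq', Finset.mem_univ, if_true]
      exact hC3def.symm
    have p2 : ∑ a, ∑ b, ∑ c, ∑ d,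
        (Nc f a b c d * if c = a then (1:ℝ) else 0) • (x b * x d) = -C3 := by
      simp only [mul_ite, mul_one, mul_zero, ite_smul, zero_smul, Finset.sum_ite_irrel,
        Finset.sum_const_zero, Finset.sum_ite_eq', Finset.mem_univ, if_true]
      calc ∑ a, ∑ b, ∑ d, Nc f a b a d • (x b * x d)
          = ∑ a, ∑ b, ∑ d, -(Nc f b a a d • (x b * x d)) := by
            refine Finset.sum_congr rfl fun a _ => Finset.sum_congr rfl fun b _ =>
              Finset.sum_congr rfl fun d _ => ?_
            rw [hNs b a a d, neg_smul]
        _ = -∑ a, ∑ b, ∑ d, Nc f b a a d • (x b * x d) := by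
            simp only [Finset.sum_neg_distrib]
        _ = -∑ b, ∑ a, ∑ d, Nc f b a a d • (x b * x d) := by rw [Finset.sum_comm]
        _ = -C3 := by rw [hC3def]
    have p3 : ∑ a, ∑ b, ∑ c, ∑ d,
        (Nc f a b c d * if b = a then (1:ℝ) else 0) • (x c * x d) = 0 := by
      have hN0 : ∀ a c d, Nc f a a c d = 0 := by
        intro a c d; rw [Nc]; simp [haa]
      simp only [mul_ite, mul_one, mul_zero, ite_smul, zero_smul, Finset.sum_ite_irrel,
        Finset.sum_const_zero, Finset.sum_ite_eq', Finset.mem_univ, if_true]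
      simp [hN0]
    have p4 : ∑ a, ∑ b, ∑ c, ∑ d,
        Nc f a b c d • (x a * (x b * (x c * x d))) = E := by rw [hEdef]
    calc ∑ r, ∑ s, ∑ u, ∑ v, Nc f s u r v • (x r * (x u * (x s * x v)))
        = ∑ s, ∑ r, ∑ u, ∑ v, Nc f s u r v • (x r * (x u * (x s * x v))) := Finset.sum_comm
      _ = ∑ s, ∑ u, ∑ r, ∑ v, Nc f s u r v • (x r * (x u * (x s * x v))) :=
          Finset.sum_congr rfl fun s _ => Finset.sum_comm
      _ = ∑ a, ∑ b, ∑ c, ∑ d, ((Nc f a b c d * if c = b then (1:ℝ) else 0) • (x a * x d)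
            - (Nc f a b c d * if c = a then (1:ℝ) else 0) • (x b * x d)
            + (Nc f a b c d * if b = a then (1:ℝ) else 0) • (x c * x d)
            - Nc f a b c d • (x a * (x b * (x c * x d)))) := by
          refine Finset.sum_congr rfl fun a _ => Finset.sum_congr rfl fun b _ =>
            Finset.sum_congr rfl fun c _ => Finset.sum_congr rfl fun d _ => ?_
          rw [Q3 a b c d]
          simp only [smul_sub, smul_add, smul_smul]
      _ = (∑ a, ∑ b, ∑ c, ∑ d, (Nc f a b c d * if c = b then (1:ℝ) else 0) • (x a * x d))
          - (∑ a, ∑ b, ∑ c, ∑ d, (Nc f a b c d * if c = a then (1:ℝ) else 0) • (x b * x d))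
          + (∑ a, ∑ b, ∑ c, ∑ d, (Nc f a b c d * if b = a then (1:ℝ) else 0) • (x c * x d))
          - ∑ a, ∑ b, ∑ c, ∑ d, Nc f a b c d • (x a * (x b * (x c * x d))) := by
          simp only [Finset.sum_sub_distrib, Finset.sum_add_distrib]
      _ = C3 - (-C3) + 0 - E := by rw [p1, p2, p3, p4]
      _ = C3 + C3 - E := by abel
  -- solve the linear equation : E = C3
  have solveE : E = C3 := by
    have h : E = C3 + C3 + C3 - E - E := by
      calc E = C3 - X := step1
        _ = C3 - (-X1 - X2) := by rw [step2]
        _ = C3 - (-(C3 + C3 - E) - -E) := by rw [step4, step3]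
        _ = C3 + C3 + C3 - E - E := by abel
    have h' : E + E + E = C3 + C3 + C3 := by
      nth_rewrite 1 [h]
      abel
    have h3 : (3:ℝ) • E = (3:ℝ) • C3 := by
      calc (3:ℝ) • E = E + E + E := by module
        _ = C3 + C3 + C3 := h'
        _ = (3:ℝ) • C3 := by module
    calc E = (3:ℝ)⁻¹ • ((3:ℝ) • E) := by
          rw [inv_smul_smul₀ (by norm_num : (3:ℝ) ≠ 0)]
      _ = (3:ℝ)⁻¹ • ((3:ℝ) • C3) := by rw [h3]
      _ = C3 := inv_smul_smul₀ (by norm_num) _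
  -- evaluate C3
  have hC3val : C3 = algebraMap ℝ A (-(1/2) * ∑ a, ∑ b, ∑ c, (f a b c)^2) := by
    rw [hC3def]
    calc ∑ r, ∑ s, ∑ v, Nc f r s s v • (x r * x v)
        = ∑ r, ∑ v, ∑ s, Nc f r s s v • (x r * x v) :=
          Finset.sum_congr rfl fun r _ => Finset.sum_comm
      _ = ∑ r, ∑ v, (-(1:ℝ)) • ((∑ a, ∑ b, f a b r * f a b v) • (x r * x v)) := by
          refine Finset.sum_congr rfl fun r _ => Finset.sum_congr rfl fun v _ => ?_
          rw [← Finset.sum_smul, smul_smul]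
          congr 1
          rw [neg_one_mul]
          calc ∑ s, Nc f r s s v = ∑ s, ∑ a, f a r s * f a s v := by
                refine Finset.sum_congr rfl fun s _ => ?_; rw [Nc]
            _ = ∑ a, ∑ s, f a r s * f a s v := Finset.sum_comm
            _ = -∑ a, ∑ b, f a b r * f a b v := by
                rw [← Finset.sum_neg_distrib]
                refine Finset.sum_congr rfl fun a _ => ?_
                rw [← Finset.sum_neg_distrib]
                refine Finset.sum_congr rfl fun s _ => ?_
                rw [hf2 a s r]; ring
      _ = (-(1:ℝ)) • ∑ r, ∑ v, (∑ a, ∑ b, f a b r * f a b v) • (x r * x v) := by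
          rw [Finset.smul_sum]
          refine Finset.sum_congr rfl fun r _ => ?_
          rw [Finset.smul_sum]
      _ = (-(1:ℝ)) • algebraMap ℝ A ((1/2) * ∑ u, ∑ a, ∑ b, f a b u * f a b u) := by
          rw [LsymK x hsw (fun u v => ∑ a, ∑ b, f a b u * f a b v)
            (fun u v => Finset.sum_congr rfl fun a _ => Finset.sum_congr rfl fun b _ =>
              mul_comm _ _)]
      _ = algebraMap ℝ A (-(1/2) * ∑ a, ∑ b, ∑ c, (f a b c)^2) := by
          rw [Algebra.smul_def, ← map_mul]
          congr 1
          have hsum : ∑ u, ∑ a, ∑ b, f a b u * f a b u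
              = ∑ a, ∑ b, ∑ c, (f a b c)^2 := by
            rw [Finset.sum_comm]
            refine Finset.sum_congr rfl fun a _ => ?_
            rw [Finset.sum_comm]
            exact Finset.sum_congr rfl fun b _ => Finset.sum_congr rfl fun c _ =>
              (pow_two _).symm
          rw [hsum]; ring
  rw [step0, solveE, hC3val]

theorem LSS (hsw : ∀ a b, x a * x b = (if a = b then (1:ℝ) else 0) • (1:A) - x b * x a)
    (hf1 : ∀ a b c, f b a c = -f a b c) (hf2 : ∀ a b c, f a c b = -f a b c)
    (hc : ∀ a b c, f a b c = f b c a)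
    (hGGval : ∑ a, Gq x f a * Gq x f a
      = algebraMap ℝ A (-(1/2) * ∑ a, ∑ b, ∑ c, (f a b c)^2)) :
    Sc x f * Sc x f = algebraMap ℝ A ((-(3/4)) * ∑ a, ∑ b, ∑ c, (f a b c)^2) := by
  have hxS : ∀ d, x d * Sc x f = (3:ℝ) • Gq x f d - Sc x f * x d :=
    fun d => eq_sub_of_add_eq (L1 x f hsw hf1 hc d)
  have hGx : ∀ d b, x b * Gq x f d = Gq x f d * x b + (2:ℝ) • ∑ r, f d b r • x r :=
    L2 x f hsw hf2
  have hFdiag : ∑ u, ∑ p, ∑ q, f p q u * f p q u = ∑ a, ∑ b, ∑ c, (f a b c)^2 := by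
    rw [Finset.sum_comm]
    refine Finset.sum_congr rfl fun a _ => ?_
    rw [Finset.sum_comm]
    exact Finset.sum_congr rfl fun b _ => Finset.sum_congr rfl fun c _ => (pow_two _).symm
  -- step A : pointwise commutation of a cubic monomial past S
  have key1 : ∀ a b c, (x a * (x b * x c)) * Sc x f
      = (3:ℝ) • (x a * (x b * Gq x f c)) - (3:ℝ) • (x a * (Gq x f b * x c))
        + (3:ℝ) • (Gq x f a * (x b * x c)) - Sc x f * (x a * (x b * x c)) := by
    intro a b c
    calc (x a * (x b * x c)) * Sc x f = x a * (x b * (x c * Sc x f)) := by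
          rw [mul_assoc, mul_assoc]
      _ = x a * (x b * ((3:ℝ) • Gq x f c - Sc x f * x c)) := by rw [hxS c]
      _ = (3:ℝ) • (x a * (x b * Gq x f c)) - x a * ((x b * Sc x f) * x c) := by
          rw [mul_sub, mul_smul_comm, ← mul_assoc (x b), mul_sub, mul_smul_comm]
      _ = (3:ℝ) • (x a * (x b * Gq x f c))
          - x a * (((3:ℝ) • Gq x f b - Sc x f * x b) * x c) := by rw [hxS b]
      _ = (3:ℝ) • (x a * (x b * Gq x f c)) - (3:ℝ) • (x a * (Gq x f b * x c))
          + (x a * Sc x f) * (x b * x c) := by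
          rw [sub_mul, smul_mul_assoc, mul_sub, mul_smul_comm, mul_assoc (Sc x f),
            ← mul_assoc (x a) (Sc x f)]
          abel
      _ = (3:ℝ) • (x a * (x b * Gq x f c)) - (3:ℝ) • (x a * (Gq x f b * x c))
          + ((3:ℝ) • Gq x f a - Sc x f * x a) * (x b * x c) := by rw [hxS a]
      _ = (3:ℝ) • (x a * (x b * Gq x f c)) - (3:ℝ) • (x a * (Gq x f b * x c))
          + (3:ℝ) • (Gq x f a * (x b * x c)) - Sc x f * (x a * (x b * x c)) := by
          rw [sub_mul, smul_mul_assoc, mul_assoc (Sc x f)]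
          abel
  -- step B : expansion of S*S
  have expand : Sc x f * Sc x f
      = ∑ a, ∑ b, ∑ c, f a b c • ((x a * (x b * x c)) * Sc x f) := by
    nth_rewrite 1 [Sc]
    rw [Finset.sum_mul]
    refine Finset.sum_congr rfl fun a _ => ?_
    rw [Finset.sum_mul]
    refine Finset.sum_congr rfl fun b _ => ?_
    rw [Finset.sum_mul]
    exact Finset.sum_congr rfl fun c _ => smul_mul_assoc _ _ _
  have contract : ∑ a, ∑ b, ∑ c, f a b c • (Sc x f * (x a * (x b * x c)))
      = Sc x f * Sc x f := by
    nth_rewrite 3 [Sc]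
    rw [Finset.mul_sum]
    refine Finset.sum_congr rfl fun a _ => ?_
    rw [Finset.mul_sum]
    refine Finset.sum_congr rfl fun b _ => ?_
    rw [Finset.mul_sum]
    exact Finset.sum_congr rfl fun c _ => (mul_smul_comm _ _ _).symm
  have twoSS : Sc x f * Sc x f + Sc x f * Sc x f
      = (3:ℝ) • (∑ a, ∑ b, ∑ c, f a b c • (x a * (x b * Gq x f c)))
        - (3:ℝ) • (∑ a, ∑ b, ∑ c, f a b c • (x a * (Gq x f b * x c)))
        + (3:ℝ) • (∑ a, ∑ b, ∑ c, f a b c • (Gq x f a * (x b * x c))) := by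
    nth_rewrite 1 [expand]
    rw [← contract, ← Finset.sum_add_distrib]
    simp only [← Finset.sum_add_distrib]
    calc ∑ a, ∑ b, ∑ c, (f a b c • (x a * (x b * x c) * Sc x f)
            + f a b c • (Sc x f * (x a * (x b * x c))))
        = ∑ a, ∑ b, ∑ c, ((3:ℝ) • (f a b c • (x a * (x b * Gq x f c)))
            - (3:ℝ) • (f a b c • (x a * (Gq x f b * x c)))
            + (3:ℝ) • (f a b c • (Gq x f a * (x b * x c)))) := by
          refine Finset.sum_congr rfl fun a _ => Finset.sum_congr rfl fun b _ =>
            Finset.sum_congr rfl fun c _ => ?_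
          rw [key1 a b c]
          module
      _ = _ := by
          simp only [Finset.sum_add_distrib, Finset.sum_sub_distrib, ← Finset.smul_sum]
  -- step C : commuting generators past G
  have key2 : ∀ a b c, x a * (x b * Gq x f c) = Gq x f c * (x a * x b)
      + ((2:ℝ) • ∑ r, f c a r • (x r * x b) + (2:ℝ) • ∑ r, f c b r • (x a * x r)) := by
    intro a b c
    rw [hGx c b, mul_add, ← mul_assoc (x a) (Gq x f c) (x b), hGx c a]
    rw [add_mul, smul_mul_assoc, Finset.sum_mul, mul_smul_comm, Finset.mul_sum, mul_assoc]
    simp only [smul_mul_assoc, mul_smul_comm]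
    abel
  have key3 : ∀ a b c, x a * (Gq x f b * x c) = Gq x f b * (x a * x c)
      + (2:ℝ) • ∑ r, f b a r • (x r * x c) := by
    intro a b c
    rw [← mul_assoc, hGx b a, add_mul, smul_mul_assoc, Finset.sum_mul, mul_assoc]
    simp only [smul_mul_assoc]
  have pull : ∀ (t : ℝ) (g : Fin n → ℝ) (m : Fin n → A),
      t • ((2:ℝ) • ∑ r, g r • m r) = (2:ℝ) • ∑ r, (t * g r) • m r := by
    intro t g m
    rw [smul_comm t (2:ℝ), Finset.smul_sum]
    simp only [smul_smul]
  -- step D : the three double-commutator sums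
  have hU3 : ∑ a, ∑ b, ∑ c, f a b c • (Gq x f a * (x b * x c))
      = ∑ a, Gq x f a * Gq x f a := by
    refine Finset.sum_congr rfl fun a _ => ?_
    calc ∑ b, ∑ c, f a b c • (Gq x f a * (x b * x c))
        = Gq x f a * ∑ b, ∑ c, f a b c • (x b * x c) := by
          rw [Finset.mul_sum]
          refine Finset.sum_congr rfl fun b _ => ?_
          rw [Finset.mul_sum]
          exact Finset.sum_congr rfl fun c _ => (mul_smul_comm _ _ _).symm
      _ = Gq x f a * Gq x f a := rfl
  have hU1 : ∑ a, ∑ b, ∑ c, f a b c • (x a * (x b * Gq x f c))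
      = (∑ a, ∑ b, ∑ c, f a b c • (Gq x f c * (x a * x b)))
        + ((2:ℝ) • (∑ a, ∑ b, ∑ c, ∑ r, (f a b c * f c a r) • (x r * x b))
          + (2:ℝ) • (∑ a, ∑ b, ∑ c, ∑ r, (f a b c * f c b r) • (x a * x r))) := by
    calc ∑ a, ∑ b, ∑ c, f a b c • (x a * (x b * Gq x f c))
        = ∑ a, ∑ b, ∑ c, (f a b c • (Gq x f c * (x a * x b))
            + ((2:ℝ) • ∑ r, (f a b c * f c a r) • (x r * x b)
              + (2:ℝ) • ∑ r, (f a b c * f c b r) • (x a * x r))) := by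
          refine Finset.sum_congr rfl fun a _ => Finset.sum_congr rfl fun b _ =>
            Finset.sum_congr rfl fun c _ => ?_
          rw [key2 a b c, smul_add, smul_add, pull, pull]
      _ = _ := by
          simp only [Finset.sum_add_distrib, ← Finset.smul_sum]
  have hU2 : ∑ a, ∑ b, ∑ c, f a b c • (x a * (Gq x f b * x c))
      = (∑ a, ∑ b, ∑ c, f a b c • (Gq x f b * (x a * x c)))
        + (2:ℝ) • (∑ a, ∑ b, ∑ c, ∑ r, (f a b c * f b a r) • (x r * x c)) := by
    calc ∑ a, ∑ b, ∑ c, f a b c • (x a * (Gq x f b * x c))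
        = ∑ a, ∑ b, ∑ c, (f a b c • (Gq x f b * (x a * x c))
            + (2:ℝ) • ∑ r, (f a b c * f b a r) • (x r * x c)) := by
          refine Finset.sum_congr rfl fun a _ => Finset.sum_congr rfl fun b _ =>
            Finset.sum_congr rfl fun c _ => ?_
          rw [key3 a b c, smul_add, pull]
      _ = _ := by
          simp only [Finset.sum_add_distrib, ← Finset.smul_sum]
  -- step E : the V sums
  have hV1 : ∑ a, ∑ b, ∑ c, f a b c • (Gq x f c * (x a * x b))
      = ∑ a, Gq x f a * Gq x f a := by
    calc ∑ a, ∑ b, ∑ c, f a b c • (Gq x f c * (x a * x b))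
        = ∑ a, ∑ c, ∑ b, f a b c • (Gq x f c * (x a * x b)) :=
          Finset.sum_congr rfl fun a _ => Finset.sum_comm
      _ = ∑ c, ∑ a, ∑ b, f a b c • (Gq x f c * (x a * x b)) := Finset.sum_comm
      _ = ∑ a, ∑ b, ∑ c, f a b c • (Gq x f a * (x b * x c)) := by
          refine Finset.sum_congr rfl fun a _ => Finset.sum_congr rfl fun b _ =>
            Finset.sum_congr rfl fun c _ => ?_
          rw [← hc a b c]
      _ = ∑ a, Gq x f a * Gq x f a := hU3
  have hV2 : ∑ a, ∑ b, ∑ c, f a b c • (Gq x f b * (x a * x c))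
      = -∑ a, Gq x f a * Gq x f a := by
    calc ∑ a, ∑ b, ∑ c, f a b c • (Gq x f b * (x a * x c))
        = ∑ b, ∑ a, ∑ c, f a b c • (Gq x f b * (x a * x c)) := Finset.sum_comm
      _ = ∑ a, ∑ b, ∑ c, -(f a b c • (Gq x f a * (x b * x c))) := by
          refine Finset.sum_congr rfl fun a _ => Finset.sum_congr rfl fun b _ =>
            Finset.sum_congr rfl fun c _ => ?_
          rw [hf1 a b c, neg_smul]
      _ = -∑ a, ∑ b, ∑ c, f a b c • (Gq x f a * (x b * x c)) := by
          simp only [Finset.sum_neg_distrib]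
      _ = -∑ a, Gq x f a * Gq x f a := by rw [hU3]
  -- step F : the W sums
  have hW1 : ∑ a, ∑ b, ∑ c, ∑ r, (f a b c * f c a r) • (x r * x b)
      = algebraMap ℝ A ((1/2) * ∑ a, ∑ b, ∑ c, (f a b c)^2) := by
    rw [collect24 (fun a b c r => f a b c * f c a r) (fun b r => x r * x b),
      Finset.sum_comm]
    calc ∑ r, ∑ b, (∑ a, ∑ c, f a b c * f c a r) • (x r * x b)
        = ∑ r, ∑ b, (∑ p, ∑ q, f p q b * f p q r) • (x r * x b) := by
          refine Finset.sum_congr rfl fun r _ => Finset.sum_congr rfl fun b _ => ?_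
          congr 1
          calc ∑ a, ∑ c, f a b c * f c a r = ∑ a, ∑ c, f c a b * f c a r := by
                refine Finset.sum_congr rfl fun a _ => Finset.sum_congr rfl fun c _ => ?_
                rw [show f a b c = f c a b by rw [hc a b c, hc b c a]]
            _ = ∑ p, ∑ q, f p q b * f p q r := Finset.sum_comm
      _ = algebraMap ℝ A ((1/2) * ∑ u, ∑ p, ∑ q, f p q u * f p q u) :=
          LsymK x hsw (fun u v => ∑ p, ∑ q, f p q v * f p q u)
            (fun u v => Finset.sum_congr rfl fun p _ => Finset.sum_congr rfl fun q _ =>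
              mul_comm _ _)
      _ = algebraMap ℝ A ((1/2) * ∑ a, ∑ b, ∑ c, (f a b c)^2) := by rw [hFdiag]
  have hW2 : ∑ a, ∑ b, ∑ c, ∑ r, (f a b c * f c b r) • (x a * x r)
      = algebraMap ℝ A (-((1/2) * ∑ a, ∑ b, ∑ c, (f a b c)^2)) := by
    rw [collect14 (fun a b c r => f a b c * f c b r) (fun a r => x a * x r)]
    calc ∑ a, ∑ r, (∑ b, ∑ c, f a b c * f c b r) • (x a * x r)
        = ∑ a, ∑ r, -((∑ p, ∑ q, f p q a * f p q r) • (x a * x r)) := by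
          refine Finset.sum_congr rfl fun a _ => Finset.sum_congr rfl fun r _ => ?_
          rw [← neg_smul]
          congr 1
          calc ∑ b, ∑ c, f a b c * f c b r = ∑ b, ∑ c, -(f b c a * f b c r) := by
                refine Finset.sum_congr rfl fun b _ => Finset.sum_congr rfl fun c _ => ?_
                rw [hc a b c, hf1 b c r]; ring
            _ = -(∑ p, ∑ q, f p q a * f p q r) := by
                simp only [Finset.sum_neg_distrib]
      _ = -∑ a, ∑ r, (∑ p, ∑ q, f p q a * f p q r) • (x a * x r) := by
          simp only [Finset.sum_neg_distrib]
      _ = -algebraMap ℝ A ((1/2) * ∑ u, ∑ p, ∑ q, f p q u * f p q u) := by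
          rw [LsymK x hsw (fun u v => ∑ p, ∑ q, f p q u * f p q v)
            (fun u v => Finset.sum_congr rfl fun p _ => Finset.sum_congr rfl fun q _ =>
              mul_comm _ _)]
      _ = algebraMap ℝ A (-((1/2) * ∑ a, ∑ b, ∑ c, (f a b c)^2)) := by
          rw [← map_neg, hFdiag]
  have hW3 : ∑ a, ∑ b, ∑ c, ∑ r, (f a b c * f b a r) • (x r * x c)
      = algebraMap ℝ A (-((1/2) * ∑ a, ∑ b, ∑ c, (f a b c)^2)) := by
    rw [collect34 (fun a b c r => f a b c * f b a r) (fun c r => x r * x c),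
      Finset.sum_comm]
    calc ∑ r, ∑ c, (∑ a, ∑ b, f a b c * f b a r) • (x r * x c)
        = ∑ r, ∑ c, -((∑ p, ∑ q, f p q c * f p q r) • (x r * x c)) := by
          refine Finset.sum_congr rfl fun r _ => Finset.sum_congr rfl fun c _ => ?_
          rw [← neg_smul]
          congr 1
          calc ∑ a, ∑ b, f a b c * f b a r = ∑ a, ∑ b, -(f a b c * f a b r) := by
                refine Finset.sum_congr rfl fun a _ => Finset.sum_congr rfl fun b _ => ?_
                rw [hf1 a b r]; ring
            _ = -(∑ p, ∑ q, f p q c * f p q r) := by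
                simp only [Finset.sum_neg_distrib]
      _ = -∑ r, ∑ c, (∑ p, ∑ q, f p q c * f p q r) • (x r * x c) := by
          simp only [Finset.sum_neg_distrib]
      _ = -algebraMap ℝ A ((1/2) * ∑ u, ∑ p, ∑ q, f p q u * f p q u) := by
          rw [LsymK x hsw (fun u v => ∑ p, ∑ q, f p q v * f p q u)
            (fun u v => Finset.sum_congr rfl fun p _ => Finset.sum_congr rfl fun q _ =>
              mul_comm _ _)]
      _ = algebraMap ℝ A (-((1/2) * ∑ a, ∑ b, ∑ c, (f a b c)^2)) := by
          rw [← map_neg, hFdiag]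
  -- final assembly
  have h2 : Sc x f * Sc x f + Sc x f * Sc x f
      = algebraMap ℝ A ((-(3/2)) * ∑ a, ∑ b, ∑ c, (f a b c)^2) := by
    rw [twoSS, hU1, hU2, hU3, hV1, hV2, hW1, hW2, hW3, hGGval]
    simp only [Algebra.smul_def, ← map_mul, ← map_add, ← map_sub, ← map_neg]
    congr 1
    ring
  calc Sc x f * Sc x f
      = (2⁻¹:ℝ) • (Sc x f * Sc x f + Sc x f * Sc x f) := by
        rw [← two_smul ℝ, smul_smul]; norm_num
    _ = (2⁻¹:ℝ) • algebraMap ℝ A ((-(3/2)) * ∑ a, ∑ b, ∑ c, (f a b c)^2) := by rw [h2]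
    _ = algebraMap ℝ A ((-(3/4)) * ∑ a, ∑ b, ∑ c, (f a b c)^2) := by
        rw [Algebra.smul_def, ← map_mul]
        congr 1
        ring


end GammaSqAux

/-- In the Clifford algebra `Cl(𝔤)` of a real Lie algebra `𝔤` with
ad-invariant inner product and orthonormal basis `e`, the cubic element
`γ = -(1/6) ∑ f_{abc} x_a x_b x_c` squares to the scalar `-(1/48) ∑ f_{abc}²`. -/
theorem gamma_sq_scalar
    {n : ℕ} {g : Type*} [LieRing g] [LieAlgebra ℝ g]
    -- the ad-invariant inner product, as a symmetric bilinear form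
    (ip : LinearMap.BilinForm ℝ g)
    (ip_symm : ∀ v w : g, ip v w = ip w v)
    (ip_inv : ∀ v w z : g, ip ⁅v, w⁆ z + ip w ⁅v, z⁆ = 0)
    -- an orthonormal basis
    (e : Module.Basis (Fin n) ℝ g)
    (he : ∀ a b, ip (e a) (e b) = if a = b then (1 : ℝ) else 0)
    -- the quadratic form Q(v) = ½⟨v,v⟩ and its Clifford algebra
    (Q : QuadraticForm ℝ g)
    (hQ : ∀ v, Q v = (1 / 2 : ℝ) * ip v v)
    -- structure constants
    (f : Fin n → Fin n → Fin n → ℝ)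
    (hf : ∀ a b c, f a b c = ip ⁅e a, e b⁆ (e c))
    -- the Clifford generators
    (x : Fin n → CliffordAlgebra Q)
    (hx : ∀ a, x a = CliffordAlgebra.ι Q (e a))
    -- the element γ
    (γ : CliffordAlgebra Q)
    (hγ : γ = (-(1 / 6 : ℝ)) • ∑ a, ∑ b, ∑ c, f a b c • (x a * x b * x c)) :
    γ * γ = algebraMap ℝ (CliffordAlgebra Q)
      ((-(1 / 48 : ℝ)) * ∑ a, ∑ b, ∑ c, (f a b c) ^ 2) := by
  open GammaSqAux in
  -- the polar form of Q is the inner product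
  have hpol : ∀ a b : Fin n, QuadraticMap.polar (⇑Q) (e a) (e b)
      = (if a = b then (1:ℝ) else 0) := by
    intro a b
    have h0 : QuadraticMap.polar (⇑Q) (e a) (e b) = Q (e a + e b) - Q (e a) - Q (e b) := rfl
    rw [h0, hQ, hQ, hQ, ← he a b]
    have h1 : ip (e a + e b) (e a + e b)
        = ip (e a) (e a) + ip (e a) (e b) + ip (e b) (e a) + ip (e b) (e b) := by
      simp only [map_add, LinearMap.add_apply]
      ring
    rw [h1, ip_symm (e b) (e a)]
    ring
  -- the basic Clifford relation
  have hsw : ∀ a b, x a * x b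
      = (if a = b then (1:ℝ) else 0) • (1 : CliffordAlgebra Q) - x b * x a := by
    intro a b
    have h := CliffordAlgebra.ι_mul_ι_add_swap (Q := Q) (e a) (e b)
    rw [hpol a b, Algebra.algebraMap_eq_smul_one] at h
    rw [hx, hx, eq_sub_iff_add_eq]
    exact h
  -- antisymmetry of the structure constants
  have hf1 : ∀ a b c, f b a c = -f a b c := by
    intro a b c
    rw [hf, hf]
    have hsk : ⁅e b, e a⁆ = -⁅e a, e b⁆ := by rw [← lie_skew (e a) (e b), neg_neg]
    rw [hsk, map_neg, LinearMap.neg_apply]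
  have hf2 : ∀ a b c, f a c b = -f a b c := by
    intro a b c
    rw [hf, hf, ip_symm ⁅e a, e c⁆ (e b)]
    linarith [ip_inv (e a) (e b) (e c)]
  have hc : ∀ a b c, f a b c = f b c a := by
    intro a b c
    have h1 := hf1 b a c
    have h2 := hf2 b a c
    linarith
  -- expansion of brackets in the basis
  have hrepr : ∀ (v : g) (c : Fin n), ip v (e c) = e.repr v c := by
    intro v c
    conv_lhs => rw [← Module.Basis.sum_repr e v]
    rw [LinearMap.BilinForm.sum_left]
    simp [LinearMap.BilinForm.smul_left, he, Finset.sum_ite_eq']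
  have hbr : ∀ a b, ⁅e a, e b⁆ = ∑ r, f a b r • e r := by
    intro a b
    conv_lhs => rw [← Module.Basis.sum_repr e ⁅e a, e b⁆]
    exact Finset.sum_congr rfl fun r _ => by rw [← hrepr, ← hf]
  -- sums through brackets
  have lsum : ∀ (y : g) (t : Fin n → g), ⁅y, ∑ i, t i⁆ = ∑ i, ⁅y, t i⁆ := by
    intro y t
    rw [show ⁅y, ∑ i, t i⁆ = (LieAlgebra.ad ℝ g y) (∑ i, t i) from rfl, map_sum]
    rfl
  have rsum : ∀ (y : g) (t : Fin n → g), ⁅∑ i, t i, y⁆ = ∑ i, ⁅t i, y⁆ := by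
    intro y t
    rw [← lie_skew, lsum, ← Finset.sum_neg_distrib]
    exact Finset.sum_congr rfl fun i _ => lie_skew (t i) y
  -- the Jacobi identity in coordinates
  have J0 : ∀ r u v w, ∑ a', f u v a' * f r a' w
      = (∑ a', f r u a' * f a' v w) + ∑ a', f r v a' * f u a' w := by
    intro r u v w
    have h := leibniz_lie (e r) (e u) (e v)
    rw [hbr u v, hbr r u, hbr r v, lsum, rsum, lsum] at h
    simp only [lie_smul, smul_lie] at h
    have happ := congrArg (fun z => ip z (e w)) h
    simp only [map_add, LinearMap.add_apply, LinearMap.BilinForm.sum_left,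
      LinearMap.BilinForm.smul_left, smul_eq_mul, ← hf] at happ
    exact happ
  have hJ : ∀ r s u v, Nc f r s u v = -Nc f s u r v - Nc f u r s v := by
    intro r s u v
    have h := J0 v r s u
    have e1 : ∑ a', f r s a' * f v a' u = Nc f r s u v := by
      rw [Nc]
      refine Finset.sum_congr rfl fun a _ => ?_
      rw [hc r s a, hc s a r, hc v a u]
    have e2 : ∑ a', f v r a' * f a' s u = -Nc f s u r v := by
      rw [Nc, ← Finset.sum_neg_distrib]
      refine Finset.sum_congr rfl fun a _ => ?_
      rw [hc v r a, hc r a v, hf2 a r v]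
      ring
    have e3 : ∑ a', f v s a' * f r a' u = -Nc f u r s v := by
      rw [Nc, ← Finset.sum_neg_distrib]
      refine Finset.sum_congr rfl fun a _ => ?_
      rw [hc v s a, hc s a v, hf2 a s v, hc r a u]
      ring
    rw [e1, e2, e3] at h
    linarith
  -- the main computation
  have hGGval := LGG x f hsw hf2 hJ
  have hSSval := LSS x f hsw hf1 hf2 hc hGGval
  have hSc : (∑ a, ∑ b, ∑ c, f a b c • (x a * x b * x c)) = Sc x f := by
    rw [Sc]
    exact Finset.sum_congr rfl fun a _ => Finset.sum_congr rfl fun b _ =>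
      Finset.sum_congr rfl fun c _ => by rw [mul_assoc]
  calc γ * γ = ((-(1/6):ℝ) • Sc x f) * ((-(1/6):ℝ) • Sc x f) := by rw [hγ, hSc]
    _ = ((1/36):ℝ) • (Sc x f * Sc x f) := by
        rw [smul_mul_assoc, mul_smul_comm, smul_smul]
        norm_num
    _ = ((1/36):ℝ) • algebraMap ℝ (CliffordAlgebra Q)
          ((-(3/4)) * ∑ a, ∑ b, ∑ c, (f a b c)^2) := by rw [hSSval]
    _ = algebraMap ℝ (CliffordAlgebra Q)
          ((-(1 / 48 : ℝ)) * ∑ a, ∑ b, ∑ c, (f a b c) ^ 2) := by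
        rw [Algebra.smul_def, ← map_mul]
        congr 1
        ring
end

section
/- In Cl(𝔤), for all indices a,b one has the commutator identity g_a x_b − x_b g_a = Σ_c f_{abc} x_c; that is, the commutator with g_a implements the adjoint action of e_a on the generators of the Clifford algebra. -/
/-- In `Cl(𝔤)`, the commutator with `g_a` implements the adjoint
action of `e_a` on the Clifford generators: `g_a x_b − x_b g_a = ∑_c f_{abc} x_c`. -/
theorem gCl_commutator_generator
    {n : ℕ} {g : Type*} [LieRing g] [LieAlgebra ℝ g]
    -- the ad-invariant inner product, as a symmetric bilinear form
    (ip : LinearMap.BilinForm ℝ g)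
    (ip_symm : ∀ v w : g, ip v w = ip w v)
    (ip_inv : ∀ v w z : g, ip ⁅v, w⁆ z + ip w ⁅v, z⁆ = 0)
    -- an orthonormal basis
    (e : Module.Basis (Fin n) ℝ g)
    (he : ∀ a b, ip (e a) (e b) = if a = b then (1 : ℝ) else 0)
    -- the quadratic form Q(v) = ½⟨v,v⟩ and its Clifford algebra
    (Q : QuadraticForm ℝ g)
    (hQ : ∀ v, Q v = (1 / 2 : ℝ) * ip v v)
    -- structure constants
    (f : Fin n → Fin n → Fin n → ℝ)
    (hf : ∀ a b c, f a b c = ip ⁅e a, e b⁆ (e c))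
    -- the Clifford generators
    (x : Fin n → CliffordAlgebra Q)
    (hx : ∀ a, x a = CliffordAlgebra.ι Q (e a))
    -- the elements g_a = -½ ∑ f_{ars} x_r x_s
    (gc : Fin n → CliffordAlgebra Q)
    (hgc : ∀ a, gc a = (-(1 / 2 : ℝ)) • ∑ r, ∑ s, f a r s • (x r * x s))
    :
    ∀ a b, gc a * x b - x b * gc a = ∑ c, f a b c • x c := by
  intro a b
  -- antisymmetry of f in the last two indices
  have hfas : ∀ r s, f a r s = - f a s r := by
    intro r s
    have h := ip_inv (e a) (e s) (e r)
    rw [hf, hf]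
    linarith [ip_symm (e s) ⁅e a, e r⁆]
  -- anticommutation relation for the generators
  have hsw : ∀ u v : Fin n, x u * x v + x v * x u
      = (if u = v then (1 : ℝ) else 0) • (1 : CliffordAlgebra Q) := by
    intro u v
    rw [hx, hx, CliffordAlgebra.ι_mul_ι_add_swap]
    rw [Algebra.algebraMap_eq_smul_one]
    congr 1
    rw [QuadraticMap.polar, hQ, hQ, hQ]
    simp only [map_add, LinearMap.add_apply]
    rw [ip_symm (e v) (e u), he, he, he]
    by_cases h : u = v <;> simp [h] <;> ring
  -- the commutator of a quadratic monomial with a generator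
  have hcomm : ∀ r s : Fin n, (x r * x s) * x b - x b * (x r * x s)
      = (if s = b then (1 : ℝ) else 0) • x r - (if r = b then (1 : ℝ) else 0) • x s := by
    intro r s
    have h1 := hsw s b
    have h2 := hsw r b
    have key : (x r * x s) * x b - x b * (x r * x s)
        = x r * (x s * x b + x b * x s) - (x r * x b + x b * x r) * x s := by
      noncomm_ring
    rw [key, h1, h2, mul_smul_comm, smul_mul_assoc, mul_one, one_mul]
  have expand : gc a * x b - x b * gc a
      = (-(1 / 2 : ℝ)) • ∑ r, ∑ s, f a r s • ((x r * x s) * x b - x b * (x r * x s)) := by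
    rw [hgc]
    simp only [smul_sub, Finset.sum_sub_distrib, smul_mul_assoc, mul_smul_comm,
      Finset.sum_mul, Finset.mul_sum]
  rw [expand]
  have h1 : ∑ r, ∑ s, f a r s • ((if s = b then (1:ℝ) else 0) • x r)
      = ∑ r, f a r b • x r := by
    simp [smul_ite, smul_smul]
  have h2 : ∑ r : Fin n, ∑ s, f a r s • ((if r = b then (1:ℝ) else 0) • x s)
      = ∑ s, f a b s • x s := by
    rw [Finset.sum_comm]
    simp [smul_ite, smul_smul]
  simp only [hcomm, smul_sub, Finset.sum_sub_distrib]
  rw [h1, h2]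
  have h3 : ∑ r, f a r b • x r = - ∑ r, f a b r • x r := by
    rw [← Finset.sum_neg_distrib]
    exact Finset.sum_congr rfl fun r _ => by rw [hfas r b, neg_smul]
  rw [h3]
  module
end

section
/- In Cl(𝔤), for all indices a,b one has g_a g_b − g_b g_a = Σ_c f_{abc} g_c; that is, the map e_a ↦ g_a is a Lie algebra homomorphism from 𝔤 into Cl(𝔤) (with the commutator bracket). -/
/-- In `Cl(𝔤)`, the map `e_a ↦ g_a` is a Lie algebra homomorphism:
`g_a g_b − g_b g_a = ∑_c f_{abc} g_c`. -/
theorem gCl_commutator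
    {n : ℕ} {g : Type*} [LieRing g] [LieAlgebra ℝ g]
    -- the ad-invariant inner product, as a symmetric bilinear form
    (ip : LinearMap.BilinForm ℝ g)
    (ip_symm : ∀ v w : g, ip v w = ip w v)
    (ip_inv : ∀ v w z : g, ip ⁅v, w⁆ z + ip w ⁅v, z⁆ = 0)
    -- an orthonormal basis
    (e : Module.Basis (Fin n) ℝ g)
    (he : ∀ a b, ip (e a) (e b) = if a = b then (1 : ℝ) else 0)
    -- the quadratic form Q(v) = ½⟨v,v⟩ and its Clifford algebra
    (Q : QuadraticForm ℝ g)
    (hQ : ∀ v, Q v = (1 / 2 : ℝ) * ip v v)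
    -- structure constants
    (f : Fin n → Fin n → Fin n → ℝ)
    (hf : ∀ a b c, f a b c = ip ⁅e a, e b⁆ (e c))
    -- the Clifford generators
    (x : Fin n → CliffordAlgebra Q)
    (hx : ∀ a, x a = CliffordAlgebra.ι Q (e a))
    -- the elements g_a = -½ ∑ f_{ars} x_r x_s
    (gc : Fin n → CliffordAlgebra Q)
    (hgc : ∀ a, gc a = (-(1 / 2 : ℝ)) • ∑ r, ∑ s, f a r s • (x r * x s))
    :
    ∀ a b, gc a * gc b - gc b * gc a = ∑ c, f a b c • gc c := by
  -- anticommutation relation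
  have hanti : ∀ r s, x r * x s + x s * x r
      = algebraMap ℝ (CliffordAlgebra Q) (if r = s then (1:ℝ) else 0) := by
    intro r s
    rw [hx, hx, CliffordAlgebra.ι_mul_ι_add_swap]
    congr 1
    simp only [QuadraticMap.polar, hQ, map_add, LinearMap.add_apply, he]
    by_cases h : r = s <;> simp [h, eq_comm] <;> ring
  -- antisymmetry of f in the last two indices
  have hf2 : ∀ a b c, f a c b = - f a b c := by
    intro a b c
    have h := ip_inv (e a) (e b) (e c)
    rw [ip_symm (e b)] at h
    rw [hf, hf]
    linarith
  -- expansion of brackets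
  have hrep : ∀ (v : g) (c : Fin n), ip v (e c) = e.repr v c := by
    intro v c
    conv_lhs => rw [← e.sum_repr v]
    simp [-Module.Basis.sum_repr, map_sum, he, Finset.sum_ite_eq']
  have hbrack : ∀ a b, ⁅e a, e b⁆ = ∑ c, f a b c • e c := by
    intro a b
    conv_lhs => rw [← e.sum_repr ⁅e a, e b⁆]
    refine Finset.sum_congr rfl fun c _ => ?_
    rw [hf, hrep]
  -- brackets of sums
  have sum_lie' : ∀ (F : Fin n → g) (w : g),
      ⁅(∑ c, F c : g), w⁆ = ∑ c, ⁅F c, w⁆ := by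
    intro F w
    induction (Finset.univ : Finset (Fin n)) using Finset.induction with
    | empty => simp
    | insert _ _ h ih => rw [Finset.sum_insert h, Finset.sum_insert h, add_lie, ih]
  have lie_sum' : ∀ (w : g) (F : Fin n → g),
      ⁅w, (∑ c, F c : g)⁆ = ∑ c, ⁅w, F c⁆ := by
    intro w F
    induction (Finset.univ : Finset (Fin n)) using Finset.induction with
    | empty => simp
    | insert _ _ h ih => rw [Finset.sum_insert h, Finset.sum_insert h, lie_add, ih]
  -- the Jacobi identity for f
  have hjac : ∀ a b u v, ∑ c, f a b c * f c u v
      = ∑ r, (f a r u * f b r v - f a r v * f b r u) := by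
    intro a b u v
    have lhs : ∑ c, f a b c * f c u v = ip ⁅⁅e a, e b⁆, e u⁆ (e v) := by
      rw [hbrack a b, sum_lie']
      simp only [smul_lie, map_sum, LinearMap.sum_apply, map_smul, LinearMap.smul_apply,
        smul_eq_mul, ← hf]
    have rhs : ip ⁅⁅e a, e b⁆, e u⁆ (e v)
        = ∑ r, (f a r u * f b r v - f a r v * f b r u) := by
      rw [lie_lie, hbrack b u, hbrack a u, lie_sum', lie_sum']
      simp only [lie_smul, map_sub, LinearMap.sub_apply, map_sum, LinearMap.sum_apply,
        map_smul, LinearMap.smul_apply, smul_eq_mul, ← hf]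
      rw [← Finset.sum_sub_distrib]
      refine Finset.sum_congr rfl fun r _ => ?_
      rw [hf2 b r u, hf2 a r u]
      ring
    rw [lhs, rhs]
  -- triple product commutation relation
  have hxxx : ∀ r s c, x r * x s * x c - x c * (x r * x s)
      = (if s = c then (1:ℝ) else 0) • x r - (if r = c then (1:ℝ) else 0) • x s := by
    intro r s c
    calc x r * x s * x c - x c * (x r * x s)
        = x r * (x s * x c + x c * x s) - (x r * x c + x c * x r) * x s := by noncomm_ring
      _ = x r * algebraMap ℝ (CliffordAlgebra Q) (if s = c then (1:ℝ) else 0)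
          - algebraMap ℝ (CliffordAlgebra Q) (if r = c then (1:ℝ) else 0) * x s := by
            rw [hanti, hanti]
      _ = _ := by rw [← Algebra.commutes, ← Algebra.smul_def, ← Algebra.smul_def]
  -- commutator of gc with a generator
  have hgx : ∀ a c, gc a * x c - x c * gc a = ∑ t, f a c t • x t := by
    intro a c
    calc gc a * x c - x c * gc a
        = (-(1/2:ℝ)) • ((∑ r, ∑ s, f a r s • (x r * x s)) * x c
            - x c * ∑ r, ∑ s, f a r s • (x r * x s)) := by
          rw [hgc, smul_mul_assoc, mul_smul_comm, ← smul_sub]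
      _ = (-(1/2:ℝ)) • ∑ r, ∑ s, ((f a r s * if s = c then (1:ℝ) else 0) • x r
            - (f a r s * if r = c then (1:ℝ) else 0) • x s) := by
          congr 1
          rw [Finset.sum_mul, Finset.mul_sum, ← Finset.sum_sub_distrib]
          refine Finset.sum_congr rfl fun r _ => ?_
          rw [Finset.sum_mul, Finset.mul_sum, ← Finset.sum_sub_distrib]
          refine Finset.sum_congr rfl fun s _ => ?_
          rw [smul_mul_assoc, mul_smul_comm, ← smul_sub, hxxx, smul_sub, smul_smul, smul_smul]
      _ = (-(1/2:ℝ)) • ((∑ r, f a r c • x r) - ∑ s, f a c s • x s) := by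
          congr 1
          simp only [Finset.sum_sub_distrib, mul_ite, mul_one, mul_zero, ite_smul, zero_smul,
            Finset.sum_ite_eq', Finset.mem_univ, if_true, Finset.sum_const_zero]
          congr 1
          rw [Finset.sum_comm]
          simp only [Finset.sum_ite_eq', Finset.mem_univ, if_true]
      _ = ∑ t, f a c t • x t := by
          rw [← Finset.sum_sub_distrib, Finset.smul_sum]
          refine Finset.sum_congr rfl fun t _ => ?_
          rw [hf2 a c t]
          module
  -- sum-swapping helpers
  have swap12 : ∀ (F : Fin n → Fin n → Fin n → CliffordAlgebra Q),
      ∑ r, ∑ s, ∑ t, F r s t = ∑ s, ∑ r, ∑ t, F r s t := fun F => Finset.sum_comm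
  have swap23 : ∀ (F : Fin n → Fin n → Fin n → CliffordAlgebra Q),
      ∑ r, ∑ s, ∑ t, F r s t = ∑ r, ∑ t, ∑ s, F r s t :=
    fun F => Finset.sum_congr rfl fun r _ => Finset.sum_comm
  have rev : ∀ (F : Fin n → Fin n → Fin n → CliffordAlgebra Q),
      ∑ r, ∑ s, ∑ t, F r s t = ∑ t, ∑ s, ∑ r, F r s t := by
    intro F
    rw [swap12 F, swap23 fun s r t => F r s t, swap12 fun s t r => F r s t]
  have cyc : ∀ (F : Fin n → Fin n → Fin n → CliffordAlgebra Q),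
      ∑ c, ∑ u, ∑ v, F c u v = ∑ u, ∑ v, ∑ c, F c u v := by
    intro F
    rw [swap12 F]
    exact Finset.sum_congr rfl fun u _ => Finset.sum_comm
  -- main computation
  intro a b
  calc gc a * gc b - gc b * gc a
      = (-(1/2:ℝ)) • ∑ r, ∑ s, f b r s • (gc a * (x r * x s) - (x r * x s) * gc a) := by
        conv_lhs => rw [hgc b]
        rw [mul_smul_comm, smul_mul_assoc, ← smul_sub]
        congr 1
        rw [Finset.mul_sum, Finset.sum_mul, ← Finset.sum_sub_distrib]
        refine Finset.sum_congr rfl fun r _ => ?_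
        rw [Finset.mul_sum, Finset.sum_mul, ← Finset.sum_sub_distrib]
        refine Finset.sum_congr rfl fun s _ => ?_
        rw [mul_smul_comm, smul_mul_assoc, ← smul_sub]
    _ = (-(1/2:ℝ)) • ∑ r, ∑ s, f b r s • ((∑ t, f a r t • x t) * x s
          + x r * ∑ t, f a s t • x t) := by
        congr 1
        refine Finset.sum_congr rfl fun r _ => Finset.sum_congr rfl fun s _ => ?_
        congr 1
        calc gc a * (x r * x s) - (x r * x s) * gc a
            = (gc a * x r - x r * gc a) * x s + x r * (gc a * x s - x s * gc a) := by
              noncomm_ring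
          _ = _ := by rw [hgx a r, hgx a s]
    _ = (-(1/2:ℝ)) • (∑ r, ∑ s, ∑ t, (f b r s * f a r t) • (x t * x s)
          + ∑ r, ∑ s, ∑ t, (f b r s * f a s t) • (x r * x t)) := by
        congr 1
        rw [← Finset.sum_add_distrib]
        refine Finset.sum_congr rfl fun r _ => ?_
        rw [← Finset.sum_add_distrib]
        refine Finset.sum_congr rfl fun s _ => ?_
        rw [smul_add, Finset.sum_mul, Finset.mul_sum, Finset.smul_sum, Finset.smul_sum]
        congr 1
        · exact Finset.sum_congr rfl fun t _ => by rw [smul_mul_assoc, smul_smul]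
        · exact Finset.sum_congr rfl fun t _ => by rw [mul_smul_comm, smul_smul]
    _ = (-(1/2:ℝ)) • (∑ u, ∑ v, ∑ r, (f b r v * f a r u) • (x u * x v)
          + ∑ u, ∑ v, ∑ s, (f b u s * f a s v) • (x u * x v)) := by
        rw [rev fun r s t => (f b r s * f a r t) • (x t * x s),
          swap23 fun r s t => (f b r s * f a s t) • (x r * x t)]
    _ = (-(1/2:ℝ)) • ∑ u, ∑ v, ((∑ r, f b r v * f a r u)
          + ∑ s, f b u s * f a s v) • (x u * x v) := by
        congr 1
        rw [← Finset.sum_add_distrib]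
        refine Finset.sum_congr rfl fun u _ => ?_
        rw [← Finset.sum_add_distrib]
        refine Finset.sum_congr rfl fun v _ => ?_
        rw [add_smul, Finset.sum_smul, Finset.sum_smul]
    _ = ∑ u, ∑ v, (-(1/2:ℝ) * ∑ c, f a b c * f c u v) • (x u * x v) := by
        rw [Finset.smul_sum]
        refine Finset.sum_congr rfl fun u _ => ?_
        rw [Finset.smul_sum]
        refine Finset.sum_congr rfl fun v _ => ?_
        rw [smul_smul]
        congr 1
        rw [hjac a b u v, ← Finset.sum_add_distrib, Finset.mul_sum, Finset.mul_sum]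
        refine Finset.sum_congr rfl fun r _ => ?_
        rw [hf2 b r u]
        ring
    _ = ∑ c, f a b c • gc c := by
        symm
        calc ∑ c, f a b c • gc c
            = ∑ c, ∑ u, ∑ v, (f a b c * (-(1/2:ℝ) * f c u v)) • (x u * x v) := by
              refine Finset.sum_congr rfl fun c _ => ?_
              rw [hgc c, smul_smul, Finset.smul_sum]
              refine Finset.sum_congr rfl fun u _ => ?_
              rw [Finset.smul_sum]
              refine Finset.sum_congr rfl fun v _ => ?_
              rw [smul_smul, mul_assoc]
          _ = ∑ u, ∑ v, ∑ c, (f a b c * (-(1/2:ℝ) * f c u v)) • (x u * x v) :=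
              cyc fun c u v => (f a b c * (-(1/2:ℝ) * f c u v)) • (x u * x v)
          _ = ∑ u, ∑ v, (-(1/2:ℝ) * ∑ c, f a b c * f c u v) • (x u * x v) := by
              refine Finset.sum_congr rfl fun u _ => Finset.sum_congr rfl fun v _ => ?_
              rw [← Finset.sum_smul]
              congr 1
              rw [Finset.mul_sum]
              exact Finset.sum_congr rfl fun c _ => by ring
end

section
/- In Cl(𝔤), for every index a one has the anticommutator identity x_a γ + γ x_a = g_a (i.e. the contraction ι_a = ad(x_a), acting on the odd element γ, yields g_a). -/
/-- In `Cl(𝔤)`, the anticommutator of a generator with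
`γ = -(1/6) ∑ f_{abc} x_a x_b x_c` is `g_a`: `x_a γ + γ x_a = g_a`. -/
theorem anticommutator_x_gamma
    {n : ℕ} {g : Type*} [LieRing g] [LieAlgebra ℝ g]
    -- the ad-invariant inner product, as a symmetric bilinear form
    (ip : LinearMap.BilinForm ℝ g)
    (ip_symm : ∀ v w : g, ip v w = ip w v)
    (ip_inv : ∀ v w z : g, ip ⁅v, w⁆ z + ip w ⁅v, z⁆ = 0)
    -- an orthonormal basis
    (e : Module.Basis (Fin n) ℝ g)
    (he : ∀ a b, ip (e a) (e b) = if a = b then (1 : ℝ) else 0)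
    -- the quadratic form Q(v) = ½⟨v,v⟩ and its Clifford algebra
    (Q : QuadraticForm ℝ g)
    (hQ : ∀ v, Q v = (1 / 2 : ℝ) * ip v v)
    -- structure constants
    (f : Fin n → Fin n → Fin n → ℝ)
    (hf : ∀ a b c, f a b c = ip ⁅e a, e b⁆ (e c))
    -- the Clifford generators
    (x : Fin n → CliffordAlgebra Q)
    (hx : ∀ a, x a = CliffordAlgebra.ι Q (e a))
    -- the elements g_a = -½ ∑ f_{ars} x_r x_s
    (gc : Fin n → CliffordAlgebra Q)
    (hgc : ∀ a, gc a = (-(1 / 2 : ℝ)) • ∑ r, ∑ s, f a r s • (x r * x s))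
    -- the element γ
    (γ : CliffordAlgebra Q)
    (hγ : γ = (-(1 / 6 : ℝ)) • ∑ a, ∑ b, ∑ c, f a b c • (x a * x b * x c)) :
    ∀ a, x a * γ + γ * x a = gc a := by
  -- antisymmetry of f in the first two arguments
  have hf12 : ∀ a b c, f b a c = - f a b c := by
    intro a b c
    rw [hf, hf, ← lie_skew (e a) (e b), map_neg, LinearMap.neg_apply, neg_neg]
  -- antisymmetry of f in the last two arguments
  have hf23 : ∀ a b c, f a c b = - f a b c := by
    intro a b c
    have h := ip_inv (e a) (e b) (e c)
    rw [hf, hf, ip_symm ⁅e a, e c⁆ (e b)]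
    linarith
  have hf13 : ∀ a b c, f a b c = f c a b := by
    intro a b c
    rw [hf12 a c b, hf23 a b c, neg_neg]
  -- the Clifford relation
  have hpolar : ∀ v w : g, CliffordAlgebra.ι Q v * CliffordAlgebra.ι Q w
      + CliffordAlgebra.ι Q w * CliffordAlgebra.ι Q v = algebraMap ℝ _ (ip v w) := by
    intro v w
    rw [CliffordAlgebra.ι_mul_ι_add_swap]
    congr 1
    simp only [QuadraticMap.polar, hQ, map_add, LinearMap.add_apply]
    rw [ip_symm w v]
    ring
  intro d
  have swap : ∀ r : Fin n, x d * x r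
      = (if d = r then (1 : ℝ) else 0) • (1 : CliffordAlgebra Q) - x r * x d := by
    intro r
    have h := hpolar (e d) (e r)
    rw [← hx, ← hx, he] at h
    rw [eq_sub_iff_add_eq, h, Algebra.algebraMap_eq_smul_one]
  -- key anticommutator identity for triple products
  have key : ∀ a b c : Fin n,
      x d * (x a * x b * x c) + (x a * x b * x c) * x d
      = (if d = a then (1 : ℝ) else 0) • (x b * x c)
        - (if d = b then (1 : ℝ) else 0) • (x a * x c)
        + (if d = c then (1 : ℝ) else 0) • (x a * x b) := by
    intro a b c
    have e2 : x d * (x b * x c)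
        = (if d = b then (1 : ℝ) else 0) • x c - x b * (x d * x c) := by
      rw [← mul_assoc, swap b, sub_mul, smul_mul_assoc, one_mul, mul_assoc]
    have e1 : x d * (x a * x b * x c)
        = (if d = a then (1 : ℝ) else 0) • (x b * x c) - x a * (x d * (x b * x c)) := by
      rw [show x a * x b * x c = x a * (x b * x c) from mul_assoc _ _ _, ← mul_assoc,
        swap a, sub_mul, smul_mul_assoc, one_mul, mul_assoc]
    rw [e1, e2, swap c]
    simp only [mul_sub, mul_smul_comm, mul_one, smul_sub, smul_smul]
    rw [show x a * x b * x c * x d = x a * (x b * (x c * x d)) by noncomm_ring]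
    abel
  rw [hγ, hgc]
  have hL : x d * ((-(1 / 6 : ℝ)) • ∑ a, ∑ b, ∑ c, f a b c • (x a * x b * x c))
      + ((-(1 / 6 : ℝ)) • ∑ a, ∑ b, ∑ c, f a b c • (x a * x b * x c)) * x d
      = (-(1 / 6 : ℝ)) • ∑ a, ∑ b, ∑ c,
          f a b c • (x d * (x a * x b * x c) + (x a * x b * x c) * x d) := by
    simp only [mul_smul_comm, smul_mul_assoc, Finset.mul_sum, Finset.sum_mul,
      ← smul_add, ← Finset.sum_add_distrib]
  rw [hL]
  simp only [key, smul_add, smul_sub]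
  rw [Finset.sum_congr rfl (fun a _ => Finset.sum_congr rfl
    (fun b _ => (Finset.sum_add_distrib)))]
  rw [Finset.sum_congr rfl (fun a _ => (Finset.sum_add_distrib))]
  rw [Finset.sum_add_distrib]
  rw [Finset.sum_congr rfl (fun a _ => Finset.sum_congr rfl
    (fun b _ => (Finset.sum_sub_distrib _ _)))]
  rw [Finset.sum_congr rfl (fun a _ => (Finset.sum_sub_distrib _ _))]
  rw [Finset.sum_sub_distrib]
  have sumA : (∑ a, ∑ b, ∑ c, f a b c • (if d = a then (1 : ℝ) else 0) • (x b * x c))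
      = ∑ r, ∑ s, f d r s • (x r * x s) := by
    have : ∀ a b c : Fin n, f a b c • (if d = a then (1 : ℝ) else 0) • (x b * x c)
        = if d = a then f a b c • (x b * x c) else 0 := by
      intro a b c; split <;> simp
    simp_rw [this]
    have pull : ∀ a : Fin n, (∑ b, ∑ c, if d = a then f a b c • (x b * x c) else 0)
        = if d = a then ∑ b, ∑ c, f a b c • (x b * x c) else 0 := by
      intro a; split <;> simp
    simp_rw [pull, Finset.sum_ite_eq, Finset.mem_univ, if_true]
  have sumB : (∑ a, ∑ b, ∑ c, f a b c • (if d = b then (1 : ℝ) else 0) • (x a * x c))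
      = - ∑ r, ∑ s, f d r s • (x r * x s) := by
    have : ∀ a b c : Fin n, f a b c • (if d = b then (1 : ℝ) else 0) • (x a * x c)
        = if d = b then f a b c • (x a * x c) else 0 := by
      intro a b c; split <;> simp
    simp_rw [this]
    have pull : ∀ a b : Fin n, (∑ c, if d = b then f a b c • (x a * x c) else 0)
        = if d = b then ∑ c, f a b c • (x a * x c) else 0 := by
      intro a b; split <;> simp
    simp_rw [pull, Finset.sum_ite_eq, Finset.mem_univ, if_true]
    rw [← Finset.sum_neg_distrib]
    refine Finset.sum_congr rfl fun a _ => ?_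
    rw [← Finset.sum_neg_distrib]
    refine Finset.sum_congr rfl fun c _ => ?_
    rw [hf12 d a c, neg_smul]
  have sumC : (∑ a, ∑ b, ∑ c, f a b c • (if d = c then (1 : ℝ) else 0) • (x a * x b))
      = ∑ r, ∑ s, f d r s • (x r * x s) := by
    have : ∀ a b c : Fin n, f a b c • (if d = c then (1 : ℝ) else 0) • (x a * x b)
        = if d = c then f a b c • (x a * x b) else 0 := by
      intro a b c; split <;> simp
    simp_rw [this, Finset.sum_ite_eq, Finset.mem_univ, if_true]
    refine Finset.sum_congr rfl fun a _ => Finset.sum_congr rfl fun b _ => ?_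
    rw [← hf13 a b d]
  rw [sumA, sumB, sumC, sub_neg_eq_add]
  have h3 : ∀ S : CliffordAlgebra Q, S + S + S = (3 : ℝ) • S := by
    intro S
    rw [show (3 : ℝ) = 1 + 1 + 1 by norm_num, add_smul, add_smul, one_smul]
  rw [h3, smul_smul]
  norm_num
end

section
/- In Cl(𝔤), the element γ is invariant: for every index a one has g_a γ = γ g_a. -/
open Finset

lemma mysum_lie {n : ℕ} {L : Type*} [LieRing L] (v : Fin n → L) (y : L) :
    ⁅∑ i, v i, y⁆ = ∑ i, ⁅v i, y⁆ := by
  induction (univ : Finset (Fin n)) using Finset.cons_induction with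
  | empty => simp
  | cons i s hi ih => simp [Finset.sum_insert hi, add_lie, ih]

lemma mylie_sum {n : ℕ} {L : Type*} [LieRing L] (v : Fin n → L) (y : L) :
    ⁅y, ∑ i, v i⁆ = ∑ i, ⁅y, v i⁆ := by
  induction (univ : Finset (Fin n)) using Finset.cons_induction with
  | empty => simp
  | cons i s hi ih => simp [Finset.sum_insert hi, lie_add, ih]

-- swap the 1st and 4th summation index
lemma myswap14 {n : ℕ} {M : Type*} [AddCommMonoid M] (F : Fin n → Fin n → Fin n → Fin n → M) :
    (∑ p, ∑ q, ∑ s, ∑ r, F p q s r) = ∑ p, ∑ q, ∑ s, ∑ r, F r q s p := by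
  calc (∑ p, ∑ q, ∑ s, ∑ r, F p q s r)
      = ∑ p, ∑ q, ∑ r, ∑ s, F p q s r :=
        Finset.sum_congr rfl fun p _ => Finset.sum_congr rfl fun q _ => Finset.sum_comm
    _ = ∑ p, ∑ r, ∑ q, ∑ s, F p q s r :=
        Finset.sum_congr rfl fun p _ => Finset.sum_comm
    _ = ∑ r, ∑ p, ∑ q, ∑ s, F p q s r := Finset.sum_comm
    _ = ∑ r, ∑ q, ∑ p, ∑ s, F p q s r :=
        Finset.sum_congr rfl fun r _ => Finset.sum_comm
    _ = ∑ r, ∑ q, ∑ s, ∑ p, F p q s r :=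
        Finset.sum_congr rfl fun r _ => Finset.sum_congr rfl fun q _ => Finset.sum_comm

-- swap the 2nd and 4th summation index
lemma myswap24 {n : ℕ} {M : Type*} [AddCommMonoid M] (F : Fin n → Fin n → Fin n → Fin n → M) :
    (∑ p, ∑ q, ∑ s, ∑ r, F p q s r) = ∑ p, ∑ q, ∑ s, ∑ r, F p r s q := by
  refine Finset.sum_congr rfl fun p _ => ?_
  calc (∑ q, ∑ s, ∑ r, F p q s r)
      = ∑ q, ∑ r, ∑ s, F p q s r := Finset.sum_congr rfl fun q _ => Finset.sum_comm
    _ = ∑ r, ∑ q, ∑ s, F p q s r := Finset.sum_comm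
    _ = ∑ r, ∑ s, ∑ q, F p q s r := Finset.sum_congr rfl fun r _ => Finset.sum_comm

-- swap the 3rd and 4th summation index
lemma myswap34 {n : ℕ} {M : Type*} [AddCommMonoid M] (F : Fin n → Fin n → Fin n → Fin n → M) :
    (∑ p, ∑ q, ∑ s, ∑ r, F p q s r) = ∑ p, ∑ q, ∑ s, ∑ r, F p q r s :=
  Finset.sum_congr rfl fun p _ => Finset.sum_congr rfl fun q _ => Finset.sum_comm

lemma comm3_aux {A : Type*} [Ring A] (G X Y Z P Qq R : A)
    (hX : G * X = X * G + P) (hY : G * Y = Y * G + Qq) (hZ : G * Z = Z * G + R) :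
    G * (X * Y * Z) = (X * Y * Z) * G + (P * (Y * Z) + X * (Qq * Z) + (X * Y) * R) := by
  have e1 : G * (X * Y * Z) = ((G * X) * Y) * Z := by noncomm_ring
  rw [e1, hX]
  have e2 : ((X * G + P) * Y) * Z = X * (G * Y) * Z + (P * Y) * Z := by noncomm_ring
  rw [e2, hY]
  have e3 : X * (Y * G + Qq) * Z = (X * Y) * (G * Z) + X * (Qq * Z) := by noncomm_ring
  rw [e3, hZ]
  noncomm_ring

/-- In `Cl(𝔤)`, the element `γ` is invariant: `g_a γ = γ g_a` for all `a`. -/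
theorem gamma_invariant
    {n : ℕ} {g : Type*} [LieRing g] [LieAlgebra ℝ g]
    -- the ad-invariant inner product, as a symmetric bilinear form
    (ip : LinearMap.BilinForm ℝ g)
    (ip_symm : ∀ v w : g, ip v w = ip w v)
    (ip_inv : ∀ v w z : g, ip ⁅v, w⁆ z + ip w ⁅v, z⁆ = 0)
    -- an orthonormal basis
    (e : Module.Basis (Fin n) ℝ g)
    (he : ∀ a b, ip (e a) (e b) = if a = b then (1 : ℝ) else 0)
    -- the quadratic form Q(v) = ½⟨v,v⟩ and its Clifford algebra
    (Q : QuadraticForm ℝ g)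
    (hQ : ∀ v, Q v = (1 / 2 : ℝ) * ip v v)
    -- structure constants
    (f : Fin n → Fin n → Fin n → ℝ)
    (hf : ∀ a b c, f a b c = ip ⁅e a, e b⁆ (e c))
    -- the Clifford generators
    (x : Fin n → CliffordAlgebra Q)
    (hx : ∀ a, x a = CliffordAlgebra.ι Q (e a))
    -- the elements g_a = -½ ∑ f_{ars} x_r x_s
    (gc : Fin n → CliffordAlgebra Q)
    (hgc : ∀ a, gc a = (-(1 / 2 : ℝ)) • ∑ r, ∑ s, f a r s • (x r * x s))
    -- the element γ
    (γ : CliffordAlgebra Q)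
    (hγ : γ = (-(1 / 6 : ℝ)) • ∑ a, ∑ b, ∑ c, f a b c • (x a * x b * x c)) :
    ∀ a, gc a * γ = γ * gc a := by
  -- anticommutation relations
  have hA : ∀ r s, x r * x s + x s * x r
      = algebraMap ℝ (CliffordAlgebra Q) (if r = s then (1 : ℝ) else 0) := by
    intro r s
    rw [hx, hx, CliffordAlgebra.ι_mul_ι_add_swap]
    congr 1
    have : QuadraticMap.polar Q (e r) (e s) = Q (e r + e s) - Q (e r) - Q (e s) := rfl
    rw [this, hQ, hQ, hQ]
    simp only [map_add, LinearMap.add_apply]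
    rw [ip_symm (e s) (e r), he r s]
    split_ifs <;> ring
  -- antisymmetry in the last two indices
  have hanti : ∀ a b c, f a b c = - f a c b := by
    intro a b c
    have h := ip_inv (e a) (e b) (e c)
    rw [hf, hf, ip_symm (e b) ⁅e a, e c⁆] at *
    linarith [h]
  -- the bracket in coordinates
  have hrepr : ∀ (v : g) r, e.repr v r = ip v (e r) := by
    intro v r
    conv_rhs => rw [← e.sum_repr v]
    rw [map_sum, LinearMap.sum_apply]
    simp only [map_smul, LinearMap.smul_apply, he, smul_eq_mul, mul_ite, mul_one, mul_zero]
    simp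
  have hbr : ∀ a b, ⁅e a, e b⁆ = ∑ r, f a b r • e r := by
    intro a b
    conv_lhs => rw [← e.sum_repr ⁅e a, e b⁆]
    refine Finset.sum_congr rfl fun r _ => ?_
    rw [hrepr, hf]
  -- the invariance identity for the structure constants
  have hD : ∀ a p q s,
      (∑ b, (f a p b * f b q s + f a q b * f p b s + f a s b * f p q b)) = 0 := by
    intro a p q s
    have h1 : (∑ b, f a p b * f b q s) = ip ⁅⁅e a, e p⁆, e q⁆ (e s) := by
      rw [hbr a p]
      rw [show ⁅∑ r, f a p r • e r, e q⁆ = ∑ r, f a p r • ⁅e r, e q⁆ by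
        rw [show (∑ r, f a p r • e r) = ∑ r, (fun r => f a p r • e r) r from rfl,
          mysum_lie]
        exact Finset.sum_congr rfl fun r _ => smul_lie _ _ _]
      rw [map_sum, LinearMap.sum_apply]
      exact Finset.sum_congr rfl fun r _ => by
        rw [map_smul, LinearMap.smul_apply, smul_eq_mul, ← hf r q s]
    have h2 : (∑ b, f a q b * f p b s) = ip ⁅e p, ⁅e a, e q⁆⁆ (e s) := by
      rw [hbr a q]
      rw [show ⁅e p, ∑ r, f a q r • e r⁆ = ∑ r, f a q r • ⁅e p, e r⁆ by
        rw [mylie_sum]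
        exact Finset.sum_congr rfl fun r _ => lie_smul _ _ _]
      rw [map_sum, LinearMap.sum_apply]
      exact Finset.sum_congr rfl fun r _ => by
        rw [map_smul, LinearMap.smul_apply, smul_eq_mul, ← hf p r s]
    have h3 : (∑ b, f a s b * f p q b) = ip ⁅e p, e q⁆ ⁅e a, e s⁆ := by
      rw [hbr a s, map_sum]
      exact Finset.sum_congr rfl fun r _ => by
        rw [map_smul, smul_eq_mul, ← hf p q r]
    rw [Finset.sum_add_distrib, Finset.sum_add_distrib, h1, h2, h3]
    have hjac : ⁅⁅e a, e p⁆, e q⁆ + ⁅e p, ⁅e a, e q⁆⁆ = ⁅e a, ⁅e p, e q⁆⁆ :=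
      (leibniz_lie (e a) (e p) (e q)).symm
    have : ip ⁅⁅e a, e p⁆, e q⁆ (e s) + ip ⁅e p, ⁅e a, e q⁆⁆ (e s)
        = ip ⁅e a, ⁅e p, e q⁆⁆ (e s) := by
      rw [← hjac, map_add, LinearMap.add_apply]
    have h4 := ip_inv (e a) ⁅e p, e q⁆ (e s)
    linarith [this, h4]
  -- product of two generators times a third generator
  have key : ∀ r s b, x r * x s * x b
      = x b * (x r * x s) + (if s = b then (1:ℝ) else 0) • x r
        - (if r = b then (1:ℝ) else 0) • x s := by
    intro r s b
    have e1 : x s * x b = algebraMap ℝ (CliffordAlgebra Q) (if s = b then 1 else 0) - x b * x s :=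
      eq_sub_of_add_eq (hA s b)
    have e2 : x r * x b = algebraMap ℝ (CliffordAlgebra Q) (if r = b then 1 else 0) - x b * x r :=
      eq_sub_of_add_eq (hA r b)
    calc x r * x s * x b = x r * (x s * x b) := mul_assoc _ _ _
      _ = x r * algebraMap ℝ (CliffordAlgebra Q) (if s = b then 1 else 0) - x r * x b * x s := by
          rw [e1, mul_sub, mul_assoc]
      _ = (if s = b then (1:ℝ) else 0) • x r
          - (algebraMap ℝ (CliffordAlgebra Q) (if r = b then 1 else 0) - x b * x r) * x s := by
          rw [e2, ← Algebra.commutes, ← Algebra.smul_def]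
      _ = _ := by
          rw [sub_mul, ← Algebra.smul_def, mul_assoc]
          abel
  -- the commutator of gc a with a generator
  have hB : ∀ a b, gc a * x b = x b * gc a + ∑ r, f a b r • x r := by
    intro a b
    have hstep : ∀ r : Fin n, (∑ s, f a r s • (x r * x s)) * x b
        = (∑ s, f a r s • (x b * (x r * x s)))
          + (f a r b • x r)
          - (if r = b then (∑ s, f a b s • x s) else 0) := by
      intro r
      rw [Finset.sum_mul]
      have e0 : ∀ s : Fin n, (f a r s • (x r * x s)) * x b
          = f a r s • (x b * (x r * x s))
            + (f a r s * if s = b then (1:ℝ) else 0) • x r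
            - (f a r s * if r = b then (1:ℝ) else 0) • x s := by
        intro s
        rw [smul_mul_assoc, key r s b, smul_sub, smul_add, smul_smul, smul_smul]
      rw [Finset.sum_congr rfl fun s _ => e0 s, Finset.sum_sub_distrib, Finset.sum_add_distrib]
      congr 1
      · congr 1
        simp only [mul_ite, mul_one, mul_zero, ite_smul, zero_smul,
          Finset.sum_ite_eq', Finset.mem_univ, if_true]
      · split_ifs with h
        · subst h; simp
        · simp
    have hS : (∑ r, ∑ s, f a r s • (x r * x s)) * x b
        = x b * (∑ r, ∑ s, f a r s • (x r * x s))
          + (∑ r, f a r b • x r) - (∑ s, f a b s • x s) := by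
      rw [Finset.sum_mul, Finset.sum_congr rfl fun r _ => hstep r,
        Finset.sum_sub_distrib, Finset.sum_add_distrib]
      congr 1
      · congr 1
        rw [Finset.mul_sum]
        exact Finset.sum_congr rfl fun r _ => by
          rw [Finset.mul_sum]
          exact Finset.sum_congr rfl fun s _ => (mul_smul_comm _ _ _).symm
      · simp [Finset.sum_ite_eq', Finset.mem_univ]
    have hT : (∑ r, f a r b • x r) = -∑ r, f a b r • x r := by
      rw [← Finset.sum_neg_distrib]
      exact Finset.sum_congr rfl fun r _ => by rw [hanti a r b, neg_smul]
    rw [hgc a, smul_mul_assoc, hS, hT, mul_smul_comm]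
    module
  -- commutator of gc a with a cubic monomial
  have hcomm : ∀ a p q t, gc a * (x p * x q * x t)
      = (x p * x q * x t) * gc a
        + ((∑ r, f a p r • (x r * x q * x t)) + (∑ r, f a q r • (x p * x r * x t))
           + (∑ r, f a t r • (x p * x q * x r))) := by
    intro a p q t
    rw [comm3_aux (gc a) (x p) (x q) (x t) (∑ r, f a p r • x r) (∑ r, f a q r • x r)
        (∑ r, f a t r • x r) (hB a p) (hB a q) (hB a t)]
    congr 2
    · congr 1
      · rw [Finset.sum_mul]
        exact Finset.sum_congr rfl fun r _ => by
          rw [smul_mul_assoc, mul_assoc]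
      · rw [Finset.sum_mul, Finset.mul_sum]
        exact Finset.sum_congr rfl fun r _ => by
          rw [smul_mul_assoc, mul_smul_comm, mul_assoc]
    · rw [Finset.mul_sum]
      exact Finset.sum_congr rfl fun r _ => by rw [mul_smul_comm]
  intro a
  -- the key cancellation for the triple sum
  have hC : ∀ p q t, (∑ r, (f r q t * f a r p + f p r t * f a r q + f p q r * f a r t)) = 0 := by
    intro p q t
    have h := hD a p q t
    calc (∑ r, (f r q t * f a r p + f p r t * f a r q + f p q r * f a r t))
        = ∑ r, -(f a p r * f r q t + f a q r * f p r t + f a t r * f p q r) :=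
          Finset.sum_congr rfl fun r _ => by
            rw [hanti a r p, hanti a r q, hanti a r t]; ring
      _ = -∑ r, (f a p r * f r q t + f a q r * f p r t + f a t r * f p q r) :=
          Finset.sum_neg_distrib _
      _ = 0 := by rw [h, neg_zero]
  have hzero : ∀ p q t, (∑ r, ((f r q t * f a r p) • (x p * x q * x t)
        + (f p r t * f a r q) • (x p * x q * x t)
        + (f p q r * f a r t) • (x p * x q * x t))) = 0 := by
    intro p q t
    calc (∑ r, ((f r q t * f a r p) • (x p * x q * x t)
            + (f p r t * f a r q) • (x p * x q * x t)
            + (f p q r * f a r t) • (x p * x q * x t)))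
        = ∑ r, ((f r q t * f a r p + f p r t * f a r q + f p q r * f a r t)
              • (x p * x q * x t)) :=
          Finset.sum_congr rfl fun r _ => by rw [add_smul, add_smul]
      _ = (∑ r, (f r q t * f a r p + f p r t * f a r q + f p q r * f a r t))
              • (x p * x q * x t) := (Finset.sum_smul).symm
      _ = 0 := by rw [hC p q t, zero_smul]
  have keymain : gc a * (∑ p, ∑ q, ∑ t, f p q t • (x p * x q * x t))
      = (∑ p, ∑ q, ∑ t, f p q t • (x p * x q * x t)) * gc a := by
    have e1 : (∑ p, ∑ q, ∑ t, ∑ r, (f p q t * f a p r) • (x r * x q * x t))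
        = ∑ p, ∑ q, ∑ t, ∑ r, (f r q t * f a r p) • (x p * x q * x t) := myswap14 _
    have e2 : (∑ p, ∑ q, ∑ t, ∑ r, (f p q t * f a q r) • (x p * x r * x t))
        = ∑ p, ∑ q, ∑ t, ∑ r, (f p r t * f a r q) • (x p * x q * x t) := myswap24 _
    have e3 : (∑ p, ∑ q, ∑ t, ∑ r, (f p q t * f a t r) • (x p * x q * x r))
        = ∑ p, ∑ q, ∑ t, ∑ r, (f p q r * f a r t) • (x p * x q * x t) := myswap34 _
    calc gc a * (∑ p, ∑ q, ∑ t, f p q t • (x p * x q * x t))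
        = ∑ p, ∑ q, ∑ t, f p q t • (gc a * (x p * x q * x t)) := by
          rw [Finset.mul_sum]
          refine Finset.sum_congr rfl fun p _ => ?_
          rw [Finset.mul_sum]
          refine Finset.sum_congr rfl fun q _ => ?_
          rw [Finset.mul_sum]
          exact Finset.sum_congr rfl fun t _ => (mul_smul_comm _ _ _)
      _ = ∑ p, ∑ q, ∑ t, (f p q t • ((x p * x q * x t) * gc a)
            + ((∑ r, (f p q t * f a p r) • (x r * x q * x t))
               + (∑ r, (f p q t * f a q r) • (x p * x r * x t))
               + (∑ r, (f p q t * f a t r) • (x p * x q * x r)))) := by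
          refine Finset.sum_congr rfl fun p _ => Finset.sum_congr rfl fun q _ =>
            Finset.sum_congr rfl fun t _ => ?_
          rw [hcomm a p q t, smul_add]
          congr 1
          rw [smul_add, smul_add]
          congr 2
          · rw [Finset.smul_sum]
            exact Finset.sum_congr rfl fun r _ => smul_smul _ _ _
          · rw [Finset.smul_sum]
            exact Finset.sum_congr rfl fun r _ => smul_smul _ _ _
          · rw [Finset.smul_sum]
            exact Finset.sum_congr rfl fun r _ => smul_smul _ _ _
      _ = (∑ p, ∑ q, ∑ t, f p q t • ((x p * x q * x t) * gc a))
          + ((∑ p, ∑ q, ∑ t, ∑ r, (f p q t * f a p r) • (x r * x q * x t))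
             + (∑ p, ∑ q, ∑ t, ∑ r, (f p q t * f a q r) • (x p * x r * x t))
             + (∑ p, ∑ q, ∑ t, ∑ r, (f p q t * f a t r) • (x p * x q * x r))) := by
          simp only [Finset.sum_add_distrib]
      _ = (∑ p, ∑ q, ∑ t, f p q t • ((x p * x q * x t) * gc a)) + 0 := by
          congr 1
          rw [e1, e2, e3]
          simp only [← Finset.sum_add_distrib]
          exact Finset.sum_eq_zero fun p _ => Finset.sum_eq_zero fun q _ =>
            Finset.sum_eq_zero fun t _ => hzero p q t
      _ = (∑ p, ∑ q, ∑ t, f p q t • (x p * x q * x t)) * gc a := by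
          rw [add_zero, Finset.sum_mul]
          refine Finset.sum_congr rfl fun p _ => ?_
          rw [Finset.sum_mul]
          refine Finset.sum_congr rfl fun q _ => ?_
          rw [Finset.sum_mul]
          exact Finset.sum_congr rfl fun t _ => (smul_mul_assoc _ _ _).symm
  rw [hγ, mul_smul_comm, smul_mul_assoc, keymain]
end

section
/- Define the linear map d: Cl(𝔤) → Cl(𝔤) by d(w) = γ·w − ε(w)·γ (the super-commutator with γ). Then d∘d = 0, and if Σ_{a,b,c} f_{abc}² ≠ 0 (i.e. 𝔤 is non-abelian), the differential d has trivial cohomology: every w ∈ Cl(𝔤) with d(w) = 0 lies in the image of d; explicitly, w = −(24/Σ_{a,b,c} f_{abc}²)·d(γ·w). -/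
open Finset

section CliffordAux
variable {n : ℕ} {A : Type*} [Ring A] [Algebra ℝ A]


lemma sum2_congr {M : Type*} [AddCommMonoid M] {F G : Fin n → Fin n → M}
    (h : ∀ a b, F a b = G a b) : ∑ a, ∑ b, F a b = ∑ a, ∑ b, G a b :=
  Finset.sum_congr rfl fun a _ => Finset.sum_congr rfl fun b _ => h a b

lemma sum3_congr {M : Type*} [AddCommMonoid M] {F G : Fin n → Fin n → Fin n → M}
    (h : ∀ a b c, F a b c = G a b c) :
    ∑ a, ∑ b, ∑ c, F a b c = ∑ a, ∑ b, ∑ c, G a b c :=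
  Finset.sum_congr rfl fun a _ => sum2_congr (h a)

lemma sum4_congr {M : Type*} [AddCommMonoid M] {F G : Fin n → Fin n → Fin n → Fin n → M}
    (h : ∀ a b c d, F a b c d = G a b c d) :
    ∑ a, ∑ b, ∑ c, ∑ d, F a b c d = ∑ a, ∑ b, ∑ c, ∑ d, G a b c d :=
  Finset.sum_congr rfl fun a _ => sum3_congr (h a)

lemma s12 {M : Type*} [AddCommMonoid M] (H : Fin n → Fin n → Fin n → M) :
    ∑ a, ∑ b, ∑ c, H a b c = ∑ a, ∑ b, ∑ c, H b a c := Finset.sum_comm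

lemma s23 {M : Type*} [AddCommMonoid M] (H : Fin n → Fin n → Fin n → M) :
    ∑ a, ∑ b, ∑ c, H a b c = ∑ a, ∑ b, ∑ c, H a c b :=
  Finset.sum_congr rfl fun _ _ => Finset.sum_comm

lemma s13 {M : Type*} [AddCommMonoid M] (H : Fin n → Fin n → Fin n → M) :
    ∑ a, ∑ b, ∑ c, H a b c = ∑ a, ∑ b, ∑ c, H c b a :=
  (s12 H).trans ((s23 fun a b c => H b a c).trans (s12 fun a b c => H c a b))

lemma rot1 {M : Type*} [AddCommMonoid M] (H : Fin n → Fin n → Fin n → M) :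
    ∑ a, ∑ b, ∑ c, H a b c = ∑ a, ∑ b, ∑ c, H b c a :=
  (s23 H).trans (s12 fun a b c => H a c b)

lemma rot2 {M : Type*} [AddCommMonoid M] (H : Fin n → Fin n → Fin n → M) :
    ∑ a, ∑ b, ∑ c, H a b c = ∑ a, ∑ b, ∑ c, H c a b :=
  (s12 H).trans (s23 fun a b c => H b a c)

lemma sum5_push {M : Type*} [AddCommMonoid M] (F : Fin n → Fin n → Fin n → Fin n → Fin n → M) :
    ∑ a, ∑ r, ∑ s, ∑ b, ∑ c, F a r s b c = ∑ r, ∑ s, ∑ b, ∑ c, ∑ a, F a r s b c :=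
  calc ∑ a, ∑ r, ∑ s, ∑ b, ∑ c, F a r s b c
      = ∑ r, ∑ a, ∑ s, ∑ b, ∑ c, F a r s b c := Finset.sum_comm
    _ = ∑ r, ∑ s, ∑ a, ∑ b, ∑ c, F a r s b c := Finset.sum_congr rfl fun _ _ => Finset.sum_comm
    _ = ∑ r, ∑ s, ∑ b, ∑ a, ∑ c, F a r s b c :=
        Finset.sum_congr rfl fun _ _ => Finset.sum_congr rfl fun _ _ => Finset.sum_comm
    _ = ∑ r, ∑ s, ∑ b, ∑ c, ∑ a, F a r s b c :=
        Finset.sum_congr rfl fun _ _ => Finset.sum_congr rfl fun _ _ =>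
          Finset.sum_congr rfl fun _ _ => Finset.sum_comm

lemma sum4_swap23 {M : Type*} [AddCommMonoid M] (F : Fin n → Fin n → Fin n → Fin n → M) :
    ∑ a, ∑ b, ∑ c, ∑ d, F a b c d = ∑ a, ∑ b, ∑ c, ∑ d, F a c b d :=
  Finset.sum_congr rfl fun _ _ => s12 _

lemma sum4_swap24 {M : Type*} [AddCommMonoid M] (F : Fin n → Fin n → Fin n → Fin n → M) :
    ∑ a, ∑ b, ∑ c, ∑ d, F a b c d = ∑ a, ∑ b, ∑ c, ∑ d, F a d c b :=
  Finset.sum_congr rfl fun _ _ => s13 _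

lemma sum4_pairswap {M : Type*} [AddCommMonoid M] (F : Fin n → Fin n → Fin n → Fin n → M) :
    ∑ a, ∑ b, ∑ c, ∑ d, F a b c d = ∑ a, ∑ b, ∑ c, ∑ d, F c d a b :=
  calc ∑ a, ∑ b, ∑ c, ∑ d, F a b c d
      = ∑ a, ∑ c, ∑ b, ∑ d, F a b c d := Finset.sum_congr rfl fun a _ => Finset.sum_comm
    _ = ∑ c, ∑ a, ∑ b, ∑ d, F a b c d := Finset.sum_comm
    _ = ∑ c, ∑ a, ∑ d, ∑ b, F a b c d :=
        Finset.sum_congr rfl fun c _ => Finset.sum_congr rfl fun a _ => Finset.sum_comm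
    _ = ∑ c, ∑ d, ∑ a, ∑ b, F a b c d := Finset.sum_congr rfl fun c _ => Finset.sum_comm

lemma sum_delta_mul (p : Fin n) (y : Fin n → A) :
    ∑ a, algebraMap ℝ A (if p = a then 1 else 0) * y a = y p := by
  simp [apply_ite (algebraMap ℝ A), ite_mul]

lemma sum_delta_mul' (p : Fin n) (y : Fin n → A) :
    ∑ a, algebraMap ℝ A (if a = p then 1 else 0) * y a = y p := by
  simp [apply_ite (algebraMap ℝ A), ite_mul]

lemma contract_fst (s : Fin n) (T : Fin n → Fin n → ℝ) (y : Fin n → A) :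
    ∑ b, ∑ c, T b c • (algebraMap ℝ A (if b = s then 1 else 0) * y c)
      = ∑ c, T s c • y c := by
  have h : ∀ b ∈ Finset.univ (α := Fin n),
      (∑ c, T b c • (algebraMap ℝ A (if b = s then 1 else 0) * y c))
      = algebraMap ℝ A (if b = s then 1 else 0) * ∑ c, T b c • y c := by
    intro b _; simp [Finset.mul_sum, mul_smul_comm]
  rw [Finset.sum_congr rfl h]
  exact sum_delta_mul' s (fun b => ∑ c, T b c • y c)

lemma contract_fst2 (s : Fin n) (T : Fin n → Fin n → ℝ) (y : Fin n → A) :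
    ∑ b, ∑ c, T b c • (algebraMap ℝ A (if s = b then 1 else 0) * y c)
      = ∑ c, T s c • y c := by
  have h : ∀ b ∈ Finset.univ (α := Fin n),
      (∑ c, T b c • (algebraMap ℝ A (if s = b then 1 else 0) * y c))
      = algebraMap ℝ A (if s = b then 1 else 0) * ∑ c, T b c • y c := by
    intro b _; simp [Finset.mul_sum, mul_smul_comm]
  rw [Finset.sum_congr rfl h]
  exact sum_delta_mul s (fun b => ∑ c, T b c • y c)

lemma contract_last (r : Fin n) (T : Fin n → ℝ) (y : A) :
    ∑ c, T c • (algebraMap ℝ A (if r = c then 1 else 0) * y) = T r • y := by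
  simp [apply_ite (algebraMap ℝ A), ite_mul, smul_ite, Finset.sum_ite_eq]

lemma sum_Mxx (x : Fin n → A)
    (hxx : ∀ a b, x a * x b + x b * x a = algebraMap ℝ A (if a = b then 1 else 0))
    (M : Fin n → Fin n → ℝ) (hM : ∀ r c, M r c = M c r) :
    ∑ r, ∑ c, M r c • (x r * x c) = ((1/2 : ℝ) * ∑ r, M r r) • (1:A) := by
  have swap : (∑ r, ∑ c, M r c • (x r * x c)) = ∑ r, ∑ c, M r c • (x c * x r) := by
    rw [Finset.sum_comm]
    exact sum2_congr fun r c => by rw [hM c r]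
  have h2 : (∑ r, ∑ c, M r c • (x r * x c)) + (∑ r, ∑ c, M r c • (x r * x c))
      = (∑ r, M r r) • (1:A) := by
    nth_rewrite 2 [swap]
    have e1 : (∑ r, ∑ c, M r c • (x r * x c)) + (∑ r, ∑ c, M r c • (x c * x r))
        = ∑ r, ∑ c, M r c • (x r * x c + x c * x r) := by
      rw [← Finset.sum_add_distrib]
      exact Finset.sum_congr rfl fun r _ => by
        rw [← Finset.sum_add_distrib]
        exact Finset.sum_congr rfl fun c _ => (smul_add _ _ _).symm
    rw [e1]
    have e2 : ∀ r c : Fin n, M r c • (x r * x c + x c * x r)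
        = M r c • algebraMap ℝ A (if r = c then 1 else 0) := fun r c => by rw [hxx]
    rw [sum2_congr e2, Finset.sum_smul]
    refine Finset.sum_congr rfl fun r _ => ?_
    simp [apply_ite (algebraMap ℝ A), smul_ite]
  calc ∑ r, ∑ c, M r c • (x r * x c)
      = ((1:ℝ)/2) • ((2:ℝ) • ∑ r, ∑ c, M r c • (x r * x c)) := by
        rw [smul_smul]; norm_num
    _ = ((1/2 : ℝ) * ∑ r, M r r) • (1:A) := by rw [two_smul, h2, smul_smul]

lemma L3aux (x : Fin n → A) (f : Fin n → Fin n → Fin n → ℝ)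
    (hxx : ∀ a b, x a * x b + x b * x a = algebraMap ℝ A (if a = b then 1 else 0))
    (hf1 : ∀ a b c, f b a c = - f a b c) (hf2 : ∀ a b c, f a c b = - f a b c)
    (hjac : ∀ r s b c, (∑ a, f a r s * f a b c)
        = (-(∑ a, f a r b * f a c s)) + (-(∑ a, f a r c * f a s b))) :
    ∑ r, ∑ s, ∑ b, ∑ c, (∑ a, f a r s * f a b c) • (x r * x s * (x b * x c))
      = ((-(1/2):ℝ) * ∑ a, ∑ b, ∑ c, (f a b c)^2) • (1:A) := by
  have hswap : ∀ a u v, f a u v = - f a v u := fun a u v => hf2 a v u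
  have hdiag : ∀ a r, f a r r = 0 := fun a r => by have := hf2 a r r; linarith
  -- pointwise Clifford identities
  have hquad1 : ∀ r s b c : Fin n, x r * x b * (x s * x c)
      = algebraMap ℝ A (if b = s then 1 else 0) * (x r * x c) - x r * x s * (x b * x c) := by
    intro r s b c
    linear_combination (norm := noncomm_ring) x r * hxx b s * x c
      - Algebra.commutes (if b = s then (1:ℝ) else 0) (x r) * x c
  have hquad2 : ∀ r s b c : Fin n, x r * x c * (x b * x s)
      = algebraMap ℝ A (if r = c then 1 else 0) * (x b * x s) - x c * x r * (x b * x s) := by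
    intro r s b c
    linear_combination (norm := noncomm_ring) hxx r c * (x b * x s)
  have hquad3 : ∀ r s b c : Fin n, x c * x r * (x b * x s)
      = algebraMap ℝ A (if r = b then 1 else 0) * (x c * x s) - x c * x b * (x r * x s) := by
    intro r s b c
    linear_combination (norm := noncomm_ring) x c * hxx r b * x s
      - Algebra.commutes (if r = b then (1:ℝ) else 0) (x c) * x s
  have hquad4 : ∀ r s b c : Fin n, x s * x r * (x b * x c)
      = algebraMap ℝ A (if s = r then 1 else 0) * (x b * x c) - x r * x s * (x b * x c) := by
    intro r s b c
    linear_combination (norm := noncomm_ring) hxx s r * (x b * x c)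
  -- the three contracted quadratic sums
  have hD1 : ∑ r, ∑ s, ∑ b, ∑ c, (∑ a, f a r s * f a b c) •
        (algebraMap ℝ A (if b = s then 1 else 0) * (x r * x c))
      = ((1/2:ℝ) * -(∑ a, ∑ b, ∑ c, (f a b c)^2)) • (1:A) := by
    have e1 : ∀ r s : Fin n,
        (∑ b, ∑ c, (∑ a, f a r s * f a b c) •
          (algebraMap ℝ A (if b = s then 1 else 0) * (x r * x c)))
        = ∑ c, (∑ a, f a r s * f a s c) • (x r * x c) := fun r s =>
      contract_fst s (fun b c => ∑ a, f a r s * f a b c) (fun c => x r * x c)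
    rw [sum2_congr e1]
    rw [show (∑ r, ∑ s, ∑ c, (∑ a, f a r s * f a s c) • (x r * x c))
        = ∑ r, ∑ c, ∑ s, (∑ a, f a r s * f a s c) • (x r * x c) from
      Finset.sum_congr rfl fun r _ => Finset.sum_comm]
    rw [sum2_congr (fun r c => (Finset.sum_smul).symm :
      ∀ r c : Fin n, (∑ s, (∑ a, f a r s * f a s c) • (x r * x c))
        = (∑ s, ∑ a, f a r s * f a s c) • (x r * x c))]
    rw [sum_Mxx x hxx (fun r c => ∑ s, ∑ a, f a r s * f a s c)
      (fun r c => sum2_congr fun s a => by rw [hswap a r s, hswap a s c]; ring)]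
    congr 1
    congr 1
    calc ∑ r, ∑ s, ∑ a, f a r s * f a s r
        = ∑ r, ∑ s, ∑ a, -((f a r s)^2) :=
          sum3_congr fun r s a => by rw [hswap a s r]; ring
      _ = -(∑ r, ∑ s, ∑ a, (f a r s)^2) := by simp [Finset.sum_neg_distrib]
      _ = -(∑ a, ∑ b, ∑ c, (f a b c)^2) := by
          rw [rot1 (fun r s a => (f a r s)^2)]
  have hD2 : ∑ r, ∑ s, ∑ b, ∑ c, (∑ a, f a r s * f a b c) •
        (algebraMap ℝ A (if r = c then 1 else 0) * (x b * x s))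
      = ((1/2:ℝ) * -(∑ a, ∑ b, ∑ c, (f a b c)^2)) • (1:A) := by
    have e1 : ∀ r s b : Fin n,
        (∑ c, (∑ a, f a r s * f a b c) •
          (algebraMap ℝ A (if r = c then 1 else 0) * (x b * x s)))
        = (∑ a, f a r s * f a b r) • (x b * x s) := fun r s b =>
      contract_last r (fun c => ∑ a, f a r s * f a b c) (x b * x s)
    rw [sum3_congr e1]
    rw [s13 (fun r s b => (∑ a, f a r s * f a b r) • (x b * x s))]
    rw [sum2_congr (fun b s => (Finset.sum_smul).symm :
      ∀ b s : Fin n, (∑ r, (∑ a, f a r s * f a b r) • (x b * x s))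
        = (∑ r, ∑ a, f a r s * f a b r) • (x b * x s))]
    rw [sum_Mxx x hxx (fun u v => ∑ r, ∑ a, f a r v * f a u r)
      (fun u v => sum2_congr fun r a => by rw [hswap a r v, hswap a u r]; ring)]
    congr 1
    congr 1
    calc ∑ u, ∑ r, ∑ a, f a r u * f a u r
        = ∑ u, ∑ r, ∑ a, -((f a r u)^2) :=
          sum3_congr fun u r a => by rw [hswap a u r]; ring
      _ = -(∑ u, ∑ r, ∑ a, (f a r u)^2) := by simp [Finset.sum_neg_distrib]
      _ = -(∑ a, ∑ b, ∑ c, (f a b c)^2) := by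
          rw [s13 (fun u r a => (f a r u)^2)]
  have hD3 : ∑ r, ∑ s, ∑ b, ∑ c, (∑ a, f a r s * f a b c) •
        (algebraMap ℝ A (if r = b then 1 else 0) * (x c * x s))
      = ((1/2:ℝ) * ∑ a, ∑ b, ∑ c, (f a b c)^2) • (1:A) := by
    have e1 : ∀ r s : Fin n,
        (∑ b, ∑ c, (∑ a, f a r s * f a b c) •
          (algebraMap ℝ A (if r = b then 1 else 0) * (x c * x s)))
        = ∑ c, (∑ a, f a r s * f a r c) • (x c * x s) := fun r s =>
      contract_fst2 r (fun b c => ∑ a, f a r s * f a b c) (fun c => x c * x s)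
    rw [sum2_congr e1]
    rw [s13 (fun r s c => (∑ a, f a r s * f a r c) • (x c * x s))]
    rw [sum2_congr (fun c s => (Finset.sum_smul).symm :
      ∀ c s : Fin n, (∑ r, (∑ a, f a r s * f a r c) • (x c * x s))
        = (∑ r, ∑ a, f a r s * f a r c) • (x c * x s))]
    rw [sum_Mxx x hxx (fun u v => ∑ r, ∑ a, f a r v * f a r u)
      (fun u v => sum2_congr fun r a => by ring)]
    congr 1
    congr 1
    calc ∑ u, ∑ r, ∑ a, f a r u * f a r u
        = ∑ u, ∑ r, ∑ a, (f a r u)^2 := sum3_congr fun u r a => by ring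
      _ = ∑ a, ∑ b, ∑ c, (f a b c)^2 := s13 (fun u r a => (f a r u)^2)
  -- the pair-swapped quartic term
  have hlast : ∑ r, ∑ s, ∑ b, ∑ c, (∑ a, f a r s * f a b c) • (x c * x b * (x r * x s))
      = - ∑ r, ∑ s, ∑ b, ∑ c, (∑ a, f a r s * f a b c) • (x r * x s * (x b * x c)) := by
    rw [sum4_pairswap (fun r s b c => (∑ a, f a r s * f a b c) • (x c * x b * (x r * x s)))]
    rw [sum4_congr (fun r s b c => by rw [Finset.sum_congr rfl fun a _ => mul_comm (f a b c) (f a r s)] :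
      ∀ r s b c : Fin n, (∑ a, f a b c * f a r s) • (x s * x r * (x b * x c))
        = (∑ a, f a r s * f a b c) • (x s * x r * (x b * x c)))]
    rw [sum4_congr (fun r s b c => by rw [hquad4 r s b c, smul_sub] :
      ∀ r s b c : Fin n, (∑ a, f a r s * f a b c) • (x s * x r * (x b * x c))
        = (∑ a, f a r s * f a b c) • (algebraMap ℝ A (if s = r then 1 else 0) * (x b * x c))
          - (∑ a, f a r s * f a b c) • (x r * x s * (x b * x c)))]
    simp only [Finset.sum_sub_distrib]
    have hz : ∑ r, ∑ s, ∑ b, ∑ c, (∑ a, f a r s * f a b c) •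
        (algebraMap ℝ A (if s = r then 1 else 0) * (x b * x c)) = 0 := by
      have e1 : ∀ r s : Fin n,
          (∑ b, ∑ c, (∑ a, f a r s * f a b c) •
            (algebraMap ℝ A (if s = r then 1 else 0) * (x b * x c)))
          = algebraMap ℝ A (if s = r then 1 else 0) *
              ∑ b, ∑ c, (∑ a, f a r s * f a b c) • (x b * x c) := by
        intro r s; simp [Finset.mul_sum, mul_smul_comm]
      rw [sum2_congr e1]
      have e2 : ∀ r ∈ Finset.univ (α := Fin n),
          (∑ s, algebraMap ℝ A (if s = r then 1 else 0) *
            ∑ b, ∑ c, (∑ a, f a r s * f a b c) • (x b * x c))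
          = ∑ b, ∑ c, (∑ a, f a r r * f a b c) • (x b * x c) := by
        intro r _
        exact sum_delta_mul' r (fun s => ∑ b, ∑ c, (∑ a, f a r s * f a b c) • (x b * x c))
      rw [Finset.sum_congr rfl e2]
      have e3 : ∀ r b c : Fin n, (∑ a, f a r r * f a b c) • (x b * x c) = 0 := by
        intro r b c
        rw [Finset.sum_congr rfl fun a _ => by rw [hdiag a r, zero_mul]]
        simp
      rw [sum3_congr e3]
      simp
    rw [hz, zero_sub]
  -- P2
  have hP2 : ∑ r, ∑ s, ∑ b, ∑ c, (∑ a, f a r s * f a b c) • (x r * x c * (x b * x s))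
      = (-(∑ a, ∑ b, ∑ c, (f a b c)^2)) • (1:A)
        - ∑ r, ∑ s, ∑ b, ∑ c, (∑ a, f a r s * f a b c) • (x r * x s * (x b * x c)) := by
    rw [sum4_congr (fun r s b c => by rw [hquad2 r s b c, smul_sub] :
      ∀ r s b c : Fin n, (∑ a, f a r s * f a b c) • (x r * x c * (x b * x s))
        = (∑ a, f a r s * f a b c) • (algebraMap ℝ A (if r = c then 1 else 0) * (x b * x s))
          - (∑ a, f a r s * f a b c) • (x c * x r * (x b * x s)))]
    simp only [Finset.sum_sub_distrib]
    rw [hD2]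
    rw [sum4_congr (fun r s b c => by rw [hquad3 r s b c, smul_sub] :
      ∀ r s b c : Fin n, (∑ a, f a r s * f a b c) • (x c * x r * (x b * x s))
        = (∑ a, f a r s * f a b c) • (algebraMap ℝ A (if r = b then 1 else 0) * (x c * x s))
          - (∑ a, f a r s * f a b c) • (x c * x b * (x r * x s)))]
    simp only [Finset.sum_sub_distrib]
    rw [hD3, hlast]
    module
  -- P1
  have hP1 : ∑ r, ∑ s, ∑ b, ∑ c, (∑ a, f a r s * f a b c) • (x r * x b * (x s * x c))
      = ((1/2:ℝ) * -(∑ a, ∑ b, ∑ c, (f a b c)^2)) • (1:A)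
        - ∑ r, ∑ s, ∑ b, ∑ c, (∑ a, f a r s * f a b c) • (x r * x s * (x b * x c)) := by
    rw [sum4_congr (fun r s b c => by rw [hquad1 r s b c, smul_sub] :
      ∀ r s b c : Fin n, (∑ a, f a r s * f a b c) • (x r * x b * (x s * x c))
        = (∑ a, f a r s * f a b c) • (algebraMap ℝ A (if b = s then 1 else 0) * (x r * x c))
          - (∑ a, f a r s * f a b c) • (x r * x s * (x b * x c)))]
    simp only [Finset.sum_sub_distrib]
    rw [hD1]
  -- Jacobi split
  have hE1 : ∑ r, ∑ s, ∑ b, ∑ c, (-(∑ a, f a r b * f a c s)) • (x r * x s * (x b * x c))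
      = ∑ r, ∑ s, ∑ b, ∑ c, (∑ a, f a r s * f a b c) • (x r * x b * (x s * x c)) := by
    rw [sum4_swap23 (fun r s b c => (-(∑ a, f a r b * f a c s)) • (x r * x s * (x b * x c)))]
    refine sum4_congr fun r s b c => ?_
    congr 1
    rw [Finset.sum_congr rfl (fun a _ => by rw [hf2 a b c]; ring :
      ∀ a ∈ Finset.univ (α := Fin n), f a r s * f a c b = -(f a r s * f a b c))]
    rw [Finset.sum_neg_distrib, neg_neg]
  have hE2 : ∑ r, ∑ s, ∑ b, ∑ c, (-(∑ a, f a r c * f a s b)) • (x r * x s * (x b * x c))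
      = ∑ r, ∑ s, ∑ b, ∑ c, (∑ a, f a r s * f a b c) • (x r * x c * (x b * x s)) := by
    rw [sum4_swap24 (fun r s b c => (-(∑ a, f a r c * f a s b)) • (x r * x s * (x b * x c)))]
    refine sum4_congr fun r s b c => ?_
    congr 1
    rw [Finset.sum_congr rfl (fun a _ => by rw [hf2 a b c]; ring :
      ∀ a ∈ Finset.univ (α := Fin n), f a r s * f a c b = -(f a r s * f a b c))]
    rw [Finset.sum_neg_distrib, neg_neg]
  have hfull : ∑ r, ∑ s, ∑ b, ∑ c, (∑ a, f a r s * f a b c) • (x r * x s * (x b * x c))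
      = (((1/2:ℝ) * -(∑ a, ∑ b, ∑ c, (f a b c)^2)) • (1:A)
          - ∑ r, ∑ s, ∑ b, ∑ c, (∑ a, f a r s * f a b c) • (x r * x s * (x b * x c)))
        + ((-(∑ a, ∑ b, ∑ c, (f a b c)^2)) • (1:A)
          - ∑ r, ∑ s, ∑ b, ∑ c, (∑ a, f a r s * f a b c) • (x r * x s * (x b * x c))) := by
    calc ∑ r, ∑ s, ∑ b, ∑ c, (∑ a, f a r s * f a b c) • (x r * x s * (x b * x c))
        = ∑ r, ∑ s, ∑ b, ∑ c,
            ((-(∑ a, f a r b * f a c s)) • (x r * x s * (x b * x c))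
              + (-(∑ a, f a r c * f a s b)) • (x r * x s * (x b * x c))) :=
          sum4_congr fun r s b c => by rw [← add_smul, ← hjac r s b c]
      _ = ∑ r, ∑ s, ∑ b, ∑ c, (-(∑ a, f a r b * f a c s)) • (x r * x s * (x b * x c))
          + ∑ r, ∑ s, ∑ b, ∑ c, (-(∑ a, f a r c * f a s b)) • (x r * x s * (x b * x c)) := by
          simp only [Finset.sum_add_distrib]
      _ = _ := by rw [hE1, hE2, hP1, hP2]
  have h4 : (∑ r, ∑ s, ∑ b, ∑ c, (∑ a, f a r s * f a b c) • (x r * x s * (x b * x c)))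
      + (∑ r, ∑ s, ∑ b, ∑ c, (∑ a, f a r s * f a b c) • (x r * x s * (x b * x c)))
      + (∑ r, ∑ s, ∑ b, ∑ c, (∑ a, f a r s * f a b c) • (x r * x s * (x b * x c)))
      = ((1/2:ℝ) * -(∑ a, ∑ b, ∑ c, (f a b c)^2)) • (1:A)
        + (-(∑ a, ∑ b, ∑ c, (f a b c)^2)) • (1:A) := by
    nth_rewrite 1 [hfull]; abel
  calc ∑ r, ∑ s, ∑ b, ∑ c, (∑ a, f a r s * f a b c) • (x r * x s * (x b * x c))
      = (1/3:ℝ) • ((∑ r, ∑ s, ∑ b, ∑ c, (∑ a, f a r s * f a b c) • (x r * x s * (x b * x c)))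
          + (∑ r, ∑ s, ∑ b, ∑ c, (∑ a, f a r s * f a b c) • (x r * x s * (x b * x c)))
          + (∑ r, ∑ s, ∑ b, ∑ c, (∑ a, f a r s * f a b c) • (x r * x s * (x b * x c)))) := by
        module
    _ = (1/3:ℝ) • (((1/2:ℝ) * -(∑ a, ∑ b, ∑ c, (f a b c)^2)) • (1:A)
          + (-(∑ a, ∑ b, ∑ c, (f a b c)^2)) • (1:A)) := by rw [h4]
    _ = ((-(1/2):ℝ) * ∑ a, ∑ b, ∑ c, (f a b c)^2) • (1:A) := by module

lemma anti3 (x : Fin n → A)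
    (hxx : ∀ a b, x a * x b + x b * x a = algebraMap ℝ A (if a = b then 1 else 0))
    (p a b c : Fin n) :
    x p * (x a * x b * x c) + x a * x b * x c * x p
      = algebraMap ℝ A (if p = a then 1 else 0) * (x b * x c)
      - algebraMap ℝ A (if p = b then 1 else 0) * (x a * x c)
      + algebraMap ℝ A (if p = c then 1 else 0) * (x a * x b) := by
  linear_combination (norm := noncomm_ring)
    hxx p a * (x b * x c) - x a * hxx p b * x c + x a * x b * hxx p c
      + Algebra.commutes (if p = b then (1:ℝ) else 0) (x a) * x c
      - Algebra.commutes (if p = c then (1:ℝ) else 0) (x a * x b)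

lemma L1 (x : Fin n → A) (f : Fin n → Fin n → Fin n → ℝ)
    (hxx : ∀ a b, x a * x b + x b * x a = algebraMap ℝ A (if a = b then 1 else 0))
    (hf1 : ∀ a b c, f b a c = - f a b c) (hf2 : ∀ a b c, f a c b = - f a b c)
    (p : Fin n) :
    x p * ((-(1/6:ℝ)) • ∑ a, ∑ b, ∑ c, f a b c • (x a * x b * x c))
      + ((-(1/6:ℝ)) • ∑ a, ∑ b, ∑ c, f a b c • (x a * x b * x c)) * x p
      = (-(1/2:ℝ)) • ∑ r, ∑ s, f p r s • (x r * x s) := by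
  rw [mul_smul_comm, smul_mul_assoc, ← smul_add]
  have step1 : (x p * ∑ a, ∑ b, ∑ c, f a b c • (x a * x b * x c))
      + (∑ a, ∑ b, ∑ c, f a b c • (x a * x b * x c)) * x p
      = ∑ a, ∑ b, ∑ c, f a b c •
          (algebraMap ℝ A (if p = a then 1 else 0) * (x b * x c)
           - algebraMap ℝ A (if p = b then 1 else 0) * (x a * x c)
           + algebraMap ℝ A (if p = c then 1 else 0) * (x a * x b)) := by
    rw [Finset.mul_sum, Finset.sum_mul, ← Finset.sum_add_distrib]
    refine Finset.sum_congr rfl fun a _ => ?_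
    rw [Finset.mul_sum, Finset.sum_mul, ← Finset.sum_add_distrib]
    refine Finset.sum_congr rfl fun b _ => ?_
    rw [Finset.mul_sum, Finset.sum_mul, ← Finset.sum_add_distrib]
    refine Finset.sum_congr rfl fun c _ => ?_
    rw [mul_smul_comm, smul_mul_assoc, ← smul_add, anti3 x hxx]
  rw [step1]
  have hT1 : ∑ a, ∑ b, ∑ c, f a b c • (algebraMap ℝ A (if p = a then 1 else 0) * (x b * x c))
      = ∑ r, ∑ s, f p r s • (x r * x s) := by
    have h : ∀ a ∈ Finset.univ (α := Fin n),
        (∑ b, ∑ c, f a b c • (algebraMap ℝ A (if p = a then 1 else 0) * (x b * x c)))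
        = algebraMap ℝ A (if p = a then 1 else 0) * ∑ b, ∑ c, f a b c • (x b * x c) := by
      intro a _; simp [Finset.mul_sum, mul_smul_comm]
    rw [Finset.sum_congr rfl h, sum_delta_mul]
  have hT2 : ∑ a, ∑ b, ∑ c, f a b c • (algebraMap ℝ A (if p = b then 1 else 0) * (x a * x c))
      = - ∑ r, ∑ s, f p r s • (x r * x s) := by
    rw [Finset.sum_comm]
    have h : ∀ b ∈ Finset.univ (α := Fin n),
        (∑ a, ∑ c, f a b c • (algebraMap ℝ A (if p = b then 1 else 0) * (x a * x c)))
        = algebraMap ℝ A (if p = b then 1 else 0) * ∑ a, ∑ c, f a b c • (x a * x c) := by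
      intro b _; simp [Finset.mul_sum, mul_smul_comm]
    rw [Finset.sum_congr rfl h, sum_delta_mul]
    have h2 : ∀ a ∈ Finset.univ (α := Fin n), ∀ c ∈ Finset.univ (α := Fin n),
        f a p c • (x a * x c) = -(f p a c • (x a * x c)) := by
      intro a _ c _; rw [hf1 p a c, neg_smul]
    calc ∑ a, ∑ c, f a p c • (x a * x c)
        = ∑ a, ∑ c, -(f p a c • (x a * x c)) :=
          Finset.sum_congr rfl fun a ha => Finset.sum_congr rfl fun c hc => h2 a ha c hc
      _ = - ∑ r, ∑ s, f p r s • (x r * x s) := by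
          simp [Finset.sum_neg_distrib]
  have hT3 : ∑ a, ∑ b, ∑ c, f a b c • (algebraMap ℝ A (if p = c then 1 else 0) * (x a * x b))
      = ∑ r, ∑ s, f p r s • (x r * x s) := by
    refine Finset.sum_congr rfl fun a _ => Finset.sum_congr rfl fun b _ => ?_
    have hfe : f a b p = f p a b := by linarith [hf2 a b p, hf1 p a b]
    rw [← hfe]
    simp [apply_ite (algebraMap ℝ A), ite_mul, smul_ite, Finset.sum_ite_eq]
  simp only [smul_sub, smul_add, Finset.sum_add_distrib, Finset.sum_sub_distrib]
  rw [hT1, hT2, hT3]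
  module

lemma L2 (x : Fin n → A) (f : Fin n → Fin n → Fin n → ℝ)
    (hxx : ∀ a b, x a * x b + x b * x a = algebraMap ℝ A (if a = b then 1 else 0))
    (hf2 : ∀ a b c, f a c b = - f a b c)
    (p b : Fin n) :
    ((-(1/2:ℝ)) • ∑ r, ∑ s, f p r s • (x r * x s)) * x b
      - x b * ((-(1/2:ℝ)) • ∑ r, ∑ s, f p r s • (x r * x s))
      = ∑ c, f p b c • x c := by
  rw [smul_mul_assoc, mul_smul_comm, ← smul_sub]
  have com2 : ∀ r s : Fin n, x r * x s * x b - x b * (x r * x s)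
      = algebraMap ℝ A (if s = b then 1 else 0) * x r
      - algebraMap ℝ A (if r = b then 1 else 0) * x s := by
    intro r s
    linear_combination (norm := noncomm_ring)
      x r * hxx s b - hxx r b * x s
      - Algebra.commutes (if s = b then (1:ℝ) else 0) (x r)
  have step1 : (∑ r, ∑ s, f p r s • (x r * x s)) * x b
      - x b * ∑ r, ∑ s, f p r s • (x r * x s)
      = ∑ r, ∑ s, f p r s • (algebraMap ℝ A (if s = b then 1 else 0) * x r
          - algebraMap ℝ A (if r = b then 1 else 0) * x s) := by
    rw [Finset.sum_mul, Finset.mul_sum, ← Finset.sum_sub_distrib]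
    refine Finset.sum_congr rfl fun r _ => ?_
    rw [Finset.sum_mul, Finset.mul_sum, ← Finset.sum_sub_distrib]
    refine Finset.sum_congr rfl fun s _ => ?_
    rw [smul_mul_assoc, mul_smul_comm, ← smul_sub, com2]
  rw [step1]
  simp only [smul_sub, Finset.sum_sub_distrib]
  have hU1 : ∑ r, ∑ s, f p r s • (algebraMap ℝ A (if s = b then 1 else 0) * x r)
      = - ∑ c, f p b c • x c := by
    have h : ∀ r ∈ Finset.univ (α := Fin n),
        (∑ s, f p r s • (algebraMap ℝ A (if s = b then 1 else 0) * x r))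
        = f p r b • x r := by
      intro r _
      simp [apply_ite (algebraMap ℝ A), ite_mul, smul_ite]
    rw [Finset.sum_congr rfl h]
    calc ∑ r, f p r b • x r = ∑ r, -(f p b r • x r) :=
          Finset.sum_congr rfl fun r _ => by rw [hf2 p b r, neg_smul]
      _ = - ∑ c, f p b c • x c := by rw [Finset.sum_neg_distrib]
  have hU2 : ∑ r, ∑ s, f p r s • (algebraMap ℝ A (if r = b then 1 else 0) * x s)
      = ∑ c, f p b c • x c := by
    have h : ∀ r ∈ Finset.univ (α := Fin n),
        (∑ s, f p r s • (algebraMap ℝ A (if r = b then 1 else 0) * x s))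
        = algebraMap ℝ A (if r = b then 1 else 0) * ∑ s, f p r s • x s := by
      intro r _; simp [Finset.mul_sum, mul_smul_comm]
    rw [Finset.sum_congr rfl h, sum_delta_mul']
  rw [hU1, hU2]
  module

lemma L4aux (x : Fin n → A) (f : Fin n → Fin n → Fin n → ℝ)
    (hxx : ∀ a b, x a * x b + x b * x a = algebraMap ℝ A (if a = b then 1 else 0))
    (hf1 : ∀ a b c, f b a c = - f a b c) (hf2 : ∀ a b c, f a c b = - f a b c)
    (hjac : ∀ r s b c, (∑ a, f a r s * f a b c)
        = (-(∑ a, f a r b * f a c s)) + (-(∑ a, f a r c * f a s b)))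
    (γ : A) (gv : Fin n → A)
    (hγ : γ = (-(1/6:ℝ)) • ∑ a, ∑ b, ∑ c, f a b c • (x a * x b * x c))
    (hgv : ∀ p, gv p = (-(1/2:ℝ)) • ∑ r, ∑ s, f p r s • (x r * x s)) :
    γ * γ = ((-(1/48):ℝ) * ∑ a, ∑ b, ∑ c, (f a b c)^2) • (1:A) := by
  have hcyc : ∀ a b c, f a b c = f b c a := by
    intro a b c; have h1 := hf2 b a c; have h2 := hf1 a b c; linarith
  have hgx : ∀ p, x p * γ + γ * x p = gv p := by
    intro p; rw [hγ, hgv]; exact L1 x f hxx hf1 hf2 p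
  have hgc : ∀ p b, gv p * x b - x b * gv p = ∑ c, f p b c • x c := by
    intro p b; rw [hgv]; exact L2 x f hxx hf2 p b
  have h2gv : ∀ a, ∑ b, ∑ c, f a b c • (x b * x c) = (-2:ℝ) • gv a := by
    intro a; rw [hgv, smul_smul]; norm_num
  -- pointwise supercommutator of γ with a cubic monomial
  have hstep1 : ∀ a b c : Fin n, γ * (x a * x b * x c) + x a * x b * x c * γ
      = gv a * (x b * x c) - x a * gv b * x c + x a * x b * gv c := by
    intro a b c
    linear_combination (norm := noncomm_ring)
      hgx a * (x b * x c) - x a * hgx b * x c + x a * x b * hgx c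
  -- 2 γ² as a triple sum
  have e3 : γ * γ + γ * γ = (-(1/6:ℝ)) •
      ∑ a, ∑ b, ∑ c, f a b c •
        (gv a * (x b * x c) - x a * gv b * x c + x a * x b * gv c) := by
    have u1 : γ * γ = (-(1/6:ℝ)) • (γ * ∑ a, ∑ b, ∑ c, f a b c • (x a * x b * x c)) := by
      nth_rewrite 2 [hγ]; rw [mul_smul_comm]
    have u2 : γ * γ = (-(1/6:ℝ)) • ((∑ a, ∑ b, ∑ c, f a b c • (x a * x b * x c)) * γ) := by
      nth_rewrite 1 [hγ]; rw [smul_mul_assoc]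
    have e1 : γ * γ + γ * γ = (-(1/6:ℝ)) •
        ((γ * ∑ a, ∑ b, ∑ c, f a b c • (x a * x b * x c))
          + (∑ a, ∑ b, ∑ c, f a b c • (x a * x b * x c)) * γ) := by
      nth_rewrite 1 [u1]; nth_rewrite 1 [u2]; rw [← smul_add]
    rw [e1]
    congr 1
    rw [Finset.mul_sum, Finset.sum_mul, ← Finset.sum_add_distrib]
    refine Finset.sum_congr rfl fun a _ => ?_
    rw [Finset.mul_sum, Finset.sum_mul, ← Finset.sum_add_distrib]
    refine Finset.sum_congr rfl fun b _ => ?_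
    rw [Finset.mul_sum, Finset.sum_mul, ← Finset.sum_add_distrib]
    refine Finset.sum_congr rfl fun c _ => ?_
    rw [mul_smul_comm, smul_mul_assoc, ← smul_add, hstep1]
  -- the A sum
  have hA : ∑ a, ∑ b, ∑ c, f a b c • (gv a * (x b * x c))
      = (-2:ℝ) • ((1/4:ℝ) • (((-(1/2):ℝ) * ∑ a, ∑ b, ∑ c, (f a b c)^2) • (1:A))) := by
    have e4 : ∀ a ∈ Finset.univ (α := Fin n),
        (∑ b, ∑ c, f a b c • (gv a * (x b * x c))) = (-2:ℝ) • (gv a * gv a) := by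
      intro a _
      have : (∑ b, ∑ c, f a b c • (gv a * (x b * x c)))
          = gv a * ∑ b, ∑ c, f a b c • (x b * x c) := by
        simp [Finset.mul_sum, mul_smul_comm]
      rw [this, h2gv, mul_smul_comm]
    rw [Finset.sum_congr rfl e4, ← Finset.smul_sum]
    congr 1
    have e5 : ∀ a ∈ Finset.univ (α := Fin n), gv a * gv a
        = (1/4:ℝ) • ∑ r, ∑ s, ∑ b, ∑ c,
            (f a r s * f a b c) • (x r * x s * (x b * x c)) := by
      intro a _
      rw [hgv a, smul_mul_smul_comm]
      rw [show ((-(1/2):ℝ)) * (-(1/2)) = (1/4:ℝ) by norm_num]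
      congr 1
      rw [Finset.sum_mul]
      refine Finset.sum_congr rfl fun r _ => ?_
      rw [Finset.sum_mul]
      refine Finset.sum_congr rfl fun s _ => ?_
      rw [smul_mul_assoc, Finset.mul_sum, Finset.smul_sum]
      refine Finset.sum_congr rfl fun b _ => ?_
      rw [Finset.mul_sum, Finset.smul_sum]
      refine Finset.sum_congr rfl fun c _ => ?_
      rw [mul_smul_comm, smul_smul]
    rw [Finset.sum_congr rfl e5, ← Finset.smul_sum]
    congr 1
    rw [sum5_push (fun a r s b c => (f a r s * f a b c) • (x r * x s * (x b * x c)))]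
    rw [sum4_congr (fun r s b c => (Finset.sum_smul).symm :
      ∀ r s b c : Fin n, (∑ a, (f a r s * f a b c) • (x r * x s * (x b * x c)))
        = (∑ a, f a r s * f a b c) • (x r * x s * (x b * x c)))]
    exact L3aux x f hxx hf1 hf2 hjac
  -- the B sum
  have hB : ∑ a, ∑ b, ∑ c, f a b c • (x a * gv b * x c)
      = -(∑ a, ∑ b, ∑ c, f a b c • (gv a * (x b * x c)))
        - ((1/2:ℝ) * -(∑ a, ∑ b, ∑ c, (f a b c)^2)) • (1:A) := by
    have e6 : ∀ a b c : Fin n, x a * gv b * x c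
        = gv b * (x a * x c) - ∑ d, f b a d • (x d * x c) := by
      intro a b c
      have e7 : x a * gv b * x c = gv b * (x a * x c) - (∑ d, f b a d • x d) * x c := by
        linear_combination (norm := noncomm_ring) - (hgc b a) * x c
      rw [e7, Finset.sum_mul]
      congr 1
      exact Finset.sum_congr rfl fun d _ => smul_mul_assoc _ _ _
    rw [sum3_congr (fun a b c => by rw [e6 a b c, smul_sub] :
      ∀ a b c : Fin n, f a b c • (x a * gv b * x c)
        = f a b c • (gv b * (x a * x c)) - f a b c • (∑ d, f b a d • (x d * x c)))]
    simp only [Finset.sum_sub_distrib]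
    have hB1 : ∑ a, ∑ b, ∑ c, f a b c • (gv b * (x a * x c))
        = -(∑ a, ∑ b, ∑ c, f a b c • (gv a * (x b * x c))) := by
      rw [s12 (fun a b c => f a b c • (gv b * (x a * x c)))]
      calc ∑ a, ∑ b, ∑ c, f b a c • (gv a * (x b * x c))
          = ∑ a, ∑ b, ∑ c, -(f a b c • (gv a * (x b * x c))) :=
            sum3_congr fun a b c => by rw [hf1 a b c, neg_smul]
        _ = -(∑ a, ∑ b, ∑ c, f a b c • (gv a * (x b * x c))) := by
            simp [Finset.sum_neg_distrib]
    have hB2 : ∑ a, ∑ b, ∑ c, f a b c • (∑ d, f b a d • (x d * x c))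
        = ((1/2:ℝ) * -(∑ a, ∑ b, ∑ c, (f a b c)^2)) • (1:A) := by
      have e9 : ∀ a b c : Fin n, f a b c • (∑ d, f b a d • (x d * x c))
          = ∑ d, (f a b c * f b a d) • (x d * x c) := by
        intro a b c
        rw [Finset.smul_sum]
        exact Finset.sum_congr rfl fun d _ => smul_smul _ _ _
      rw [sum3_congr e9]
      rw [sum4_pairswap (fun a b c d => (f a b c * f b a d) • (x d * x c))]
      beta_reduce
      have e8 : ∀ a b : Fin n, (∑ c, ∑ d, (f c d a * f d c b) • (x b * x a))
          = (∑ c, ∑ d, f c d a * f d c b) • (x b * x a) := by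
        intro a b
        rw [Finset.sum_smul]
        exact Finset.sum_congr rfl fun c _ => (Finset.sum_smul).symm
      rw [sum2_congr e8, Finset.sum_comm]
      rw [sum_Mxx x hxx (fun u v => ∑ c, ∑ d, f c d v * f d c u)
        (fun u v => by
          beta_reduce
          rw [Finset.sum_comm]
          exact sum2_congr fun c d => mul_comm _ _)]
      congr 2
      calc ∑ u, ∑ c, ∑ d, f c d u * f d c u
          = ∑ u, ∑ c, ∑ d, -((f c d u)^2) :=
            sum3_congr fun u c d => by rw [hf1 c d u]; ring
        _ = -(∑ u, ∑ c, ∑ d, (f c d u)^2) := by simp [Finset.sum_neg_distrib]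
        _ = -(∑ a, ∑ b, ∑ c, (f a b c)^2) := by
            rw [rot2 (fun u c d => (f c d u)^2)]
    rw [hB1, hB2]
  -- the C sum
  have hC : ∑ a, ∑ b, ∑ c, f a b c • (x a * x b * gv c)
      = -(∑ a, ∑ b, ∑ c, f a b c • (x a * gv b * x c))
        - ((1/2:ℝ) * -(∑ a, ∑ b, ∑ c, (f a b c)^2)) • (1:A) := by
    have e6 : ∀ a b c : Fin n, x a * x b * gv c
        = x a * gv c * x b - ∑ d, f c b d • (x a * x d) := by
      intro a b c
      have e7 : x a * x b * gv c = x a * gv c * x b - x a * (∑ d, f c b d • x d) := by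
        linear_combination (norm := noncomm_ring) - x a * (hgc c b)
      rw [e7]
      congr 1
      rw [Finset.mul_sum]
      exact Finset.sum_congr rfl fun d _ => mul_smul_comm _ _ _
    rw [sum3_congr (fun a b c => by rw [e6 a b c, smul_sub] :
      ∀ a b c : Fin n, f a b c • (x a * x b * gv c)
        = f a b c • (x a * gv c * x b) - f a b c • (∑ d, f c b d • (x a * x d)))]
    simp only [Finset.sum_sub_distrib]
    have hC1 : ∑ a, ∑ b, ∑ c, f a b c • (x a * gv c * x b)
        = -(∑ a, ∑ b, ∑ c, f a b c • (x a * gv b * x c)) := by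
      rw [s23 (fun a b c => f a b c • (x a * gv c * x b))]
      calc ∑ a, ∑ b, ∑ c, f a c b • (x a * gv b * x c)
          = ∑ a, ∑ b, ∑ c, -(f a b c • (x a * gv b * x c)) :=
            sum3_congr fun a b c => by rw [hf2 a b c, neg_smul]
        _ = -(∑ a, ∑ b, ∑ c, f a b c • (x a * gv b * x c)) := by
            simp [Finset.sum_neg_distrib]
    have hC2 : ∑ a, ∑ b, ∑ c, f a b c • (∑ d, f c b d • (x a * x d))
        = ((1/2:ℝ) * -(∑ a, ∑ b, ∑ c, (f a b c)^2)) • (1:A) := by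
      have e9 : ∀ a b c : Fin n, f a b c • (∑ d, f c b d • (x a * x d))
          = ∑ d, (f a b c * f c b d) • (x a * x d) := by
        intro a b c
        rw [Finset.smul_sum]
        exact Finset.sum_congr rfl fun d _ => smul_smul _ _ _
      rw [sum3_congr e9]
      rw [Finset.sum_congr rfl (fun a _ => rot1 (fun b c d => (f a b c * f c b d) • (x a * x d)))]
      beta_reduce
      have e8 : ∀ a d : Fin n, (∑ b, ∑ c, (f a b c * f c b d) • (x a * x d))
          = (∑ b, ∑ c, f a b c * f c b d) • (x a * x d) := by
        intro a d
        rw [Finset.sum_smul]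
        exact Finset.sum_congr rfl fun b _ => (Finset.sum_smul).symm
      rw [sum2_congr e8]
      rw [sum_Mxx x hxx (fun u v => ∑ b, ∑ c, f u b c * f c b v)
        (fun u v => by
          beta_reduce
          rw [Finset.sum_comm]
          exact sum2_congr fun b c => by
            rw [hcyc u c b, hcyc b c v, hcyc c v b]; ring)]
      congr 2
      calc ∑ u, ∑ b, ∑ c, f u b c * f c b u
          = ∑ u, ∑ b, ∑ c, -((f u b c)^2) := by
            refine sum3_congr fun u b c => ?_
            rw [hf1 b c u, ← hcyc u b c]; ring
        _ = -(∑ u, ∑ b, ∑ c, (f u b c)^2) := by simp [Finset.sum_neg_distrib]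
        _ = -(∑ a, ∑ b, ∑ c, (f a b c)^2) := rfl
    rw [hC1, hC2]
  -- assemble
  simp only [smul_sub, smul_add, Finset.sum_add_distrib, Finset.sum_sub_distrib] at e3
  rw [hC, hB, hA] at e3
  have ehalf : γ * γ = (1/2:ℝ) • (γ * γ + γ * γ) := by module
  rw [ehalf, e3]
  module

end CliffordAux

/-- The super-commutator `d(w) = γ·w − ε(w)·γ` with the cubic element `γ`
is a differential on `Cl(𝔤)` (`d∘d = 0`), and if `∑ f_{abc}² ≠ 0` (i.e. `𝔤` is non-abelian)
its cohomology is trivial: every cocycle `w` satisfies `w = −(24/∑ f_{abc}²)·d(γ·w)`. -/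
theorem clifford_differential_acyclic
    {n : ℕ} {g : Type*} [LieRing g] [LieAlgebra ℝ g]
    -- the ad-invariant inner product, as a symmetric bilinear form
    (ip : LinearMap.BilinForm ℝ g)
    (ip_symm : ∀ v w : g, ip v w = ip w v)
    (ip_inv : ∀ v w z : g, ip ⁅v, w⁆ z + ip w ⁅v, z⁆ = 0)
    -- an orthonormal basis
    (e : Module.Basis (Fin n) ℝ g)
    (he : ∀ a b, ip (e a) (e b) = if a = b then (1 : ℝ) else 0)
    -- the quadratic form Q(v) = ½⟨v,v⟩ and its Clifford algebra
    (Q : QuadraticForm ℝ g)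
    (hQ : ∀ v, Q v = (1 / 2 : ℝ) * ip v v)
    -- structure constants
    (f : Fin n → Fin n → Fin n → ℝ)
    (hf : ∀ a b c, f a b c = ip ⁅e a, e b⁆ (e c))
    -- the Clifford generators
    (x : Fin n → CliffordAlgebra Q)
    (hx : ∀ a, x a = CliffordAlgebra.ι Q (e a))
    -- the element γ
    (γ : CliffordAlgebra Q)
    (hγ : γ = (-(1 / 6 : ℝ)) • ∑ a, ∑ b, ∑ c, f a b c • (x a * x b * x c))
    -- the super-commutator with γ (ε = parity involution)
    (d : CliffordAlgebra Q → CliffordAlgebra Q)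
    (hd : ∀ w, d w = γ * w - CliffordAlgebra.involute w * γ) :
    (∀ w, d (d w) = 0) ∧
    ((∑ a, ∑ b, ∑ c, (f a b c) ^ 2) ≠ 0 →
      ∀ w, d w = 0 → w = (-(24 / ∑ a, ∑ b, ∑ c, (f a b c) ^ 2)) • d (γ * w)) := by
  classical
  -- coordinates of a vector in the orthonormal basis
  have hcoeff : ∀ (v : g) (c : Fin n), ip v (e c) = e.repr v c := by
    intro v c
    conv_lhs => rw [← e.sum_repr v]
    simp only [map_sum, map_smul, LinearMap.coe_sum, Finset.sum_apply,
      LinearMap.smul_apply, he, smul_eq_mul, mul_ite, mul_one, mul_zero]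
    simp
  -- total antisymmetry of the structure constants
  have hf1 : ∀ a b c, f b a c = - f a b c := by
    intro a b c
    rw [hf, hf, ← lie_skew, map_neg, LinearMap.neg_apply]
  have hf2 : ∀ a b c, f a c b = - f a b c := by
    intro a b c
    have h := ip_inv (e a) (e b) (e c)
    have h2 : ip (e b) ⁅e a, e c⁆ = ip ⁅e a, e c⁆ (e b) := ip_symm _ _
    rw [hf a c b, hf a b c]
    linarith
  have hcyc : ∀ a b c, f a b c = f b c a := by
    intro a b c; have h1 := hf2 b a c; have h2 := hf1 a b c; linarith
  -- brackets in coordinates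
  have hb : ∀ a b, ⁅e a, e b⁆ = ∑ c, f a b c • e c := by
    intro a b
    conv_lhs => rw [← e.sum_repr ⁅e a, e b⁆]
    exact Finset.sum_congr rfl fun c _ => by rw [← hcoeff, ← hf]
  have hsl : ∀ (w : Fin n → g) (m : g), ⁅(∑ i, w i), m⁆ = ∑ i, ⁅w i, m⁆ := by
    intro w m
    exact map_sum (AddMonoidHom.mk' (fun v => ⁅v, m⁆) (fun u v => add_lie u v m)) w Finset.univ
  have hls : ∀ (m : g) (w : Fin n → g), ⁅m, (∑ i, w i)⁆ = ∑ i, ⁅m, w i⁆ := by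
    intro m w
    exact map_sum (AddMonoidHom.mk' (fun v => ⁅m, v⁆) (fun u v => lie_add m u v)) w Finset.univ
  -- the Jacobi identity on structure constants
  have hstar : ∀ p q u v, ∑ a, f p q a * f a u v
      = ∑ a, f q u a * f p a v - ∑ a, f p u a * f q a v := by
    intro p q u v
    have e1 : ip ⁅⁅e p, e q⁆, e u⁆ (e v) = ∑ a, f p q a * f a u v := by
      rw [hb p q, hsl]
      rw [map_sum, LinearMap.coe_sum, Finset.sum_apply]
      refine Finset.sum_congr rfl fun a _ => ?_
      rw [smul_lie, map_smul, LinearMap.smul_apply, smul_eq_mul, ← hf a u v]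
    have e2 : ip ⁅e p, ⁅e q, e u⁆⁆ (e v) = ∑ a, f q u a * f p a v := by
      rw [hb q u, hls]
      rw [map_sum, LinearMap.coe_sum, Finset.sum_apply]
      refine Finset.sum_congr rfl fun a _ => ?_
      rw [lie_smul, map_smul, LinearMap.smul_apply, smul_eq_mul, ← hf p a v]
    have e3 : ip ⁅e q, ⁅e p, e u⁆⁆ (e v) = ∑ a, f p u a * f q a v := by
      rw [hb p u, hls]
      rw [map_sum, LinearMap.coe_sum, Finset.sum_apply]
      refine Finset.sum_congr rfl fun a _ => ?_
      rw [lie_smul, map_smul, LinearMap.smul_apply, smul_eq_mul, ← hf q a v]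
    rw [← e1, ← e2, ← e3, lie_lie, map_sub, LinearMap.sub_apply]
  have hjac : ∀ r s b c, (∑ a, f a r s * f a b c)
      = (-(∑ a, f a r b * f a c s)) + (-(∑ a, f a r c * f a s b)) := by
    intro r s b c
    have t1 : ∑ a, f a r s * f a b c = ∑ a, f r s a * f a b c :=
      Finset.sum_congr rfl fun a _ => by rw [hcyc a r s]
    have t2 : ∑ a, f s b a * f r a c = -(∑ a, f a r c * f a s b) := by
      rw [← Finset.sum_neg_distrib]
      refine Finset.sum_congr rfl fun a _ => ?_
      rw [hcyc s b a, hcyc b a s, hf2 r c a, hcyc r c a, hcyc c a r]; ring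
    have t3 : ∑ a, f r b a * f s a c = ∑ a, f a r b * f a c s := by
      refine Finset.sum_congr rfl fun a _ => ?_
      rw [hcyc r b a, hcyc b a r, hcyc s a c]
    rw [t1, hstar r s b c, t2, t3]
    ring
  -- the Clifford relations
  have hxx : ∀ a b, x a * x b + x b * x a
      = algebraMap ℝ (CliffordAlgebra Q) (if a = b then 1 else 0) := by
    intro a b
    rw [hx, hx, CliffordAlgebra.ι_mul_ι_add_swap]
    congr 1
    show Q (e a + e b) - Q (e a) - Q (e b) = _
    simp only [hQ, map_add, LinearMap.add_apply]
    rw [ip_symm (e b) (e a), he a a, he b b, he a b]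
    by_cases h : a = b <;> simp [h] <;> norm_num
  -- involute γ = -γ
  have hinvγ : CliffordAlgebra.involute γ = -γ := by
    rw [hγ]
    simp only [map_smul, map_sum, map_mul, hx, CliffordAlgebra.involute_ι]
    simp only [neg_mul, mul_neg, neg_neg, smul_neg, Finset.sum_neg_distrib]
  -- γ² is a scalar
  have hγ2 : γ * γ = ((-(1/48):ℝ) * ∑ a, ∑ b, ∑ c, (f a b c)^2) • (1:CliffordAlgebra Q) :=
    L4aux x f hxx hf1 hf2 hjac γ
      (fun p => (-(1/2:ℝ)) • ∑ r, ∑ s, f p r s • (x r * x s)) hγ (fun p => rfl)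
  have hγ2' : γ * γ = algebraMap ℝ (CliffordAlgebra Q)
      ((-(1/48):ℝ) * ∑ a, ∑ b, ∑ c, (f a b c)^2) := by
    rw [hγ2, Algebra.algebraMap_eq_smul_one]
  constructor
  · intro w
    rw [hd (d w), hd w, map_sub, map_mul, map_mul, hinvγ, CliffordAlgebra.involute_involute]
    linear_combination (norm := noncomm_ring) hγ2' * w - w * hγ2'
      + Algebra.commutes ((-(1/48):ℝ) * ∑ a, ∑ b, ∑ c, (f a b c)^2) w
  · intro hS w hw
    have hγw : γ * w = CliffordAlgebra.involute w * γ := by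
      have h0 : γ * w - CliffordAlgebra.involute w * γ = 0 := by rw [← hd w, hw]
      exact sub_eq_zero.mp h0
    have hkey : d (γ * w) = (((-(1/24)):ℝ) * ∑ a, ∑ b, ∑ c, (f a b c)^2) • w := by
      rw [hd, map_mul, hinvγ]
      have h1 : γ * (γ * w)
          = (((-(1/48)):ℝ) * ∑ a, ∑ b, ∑ c, (f a b c)^2) • w := by
        rw [← mul_assoc, hγ2, smul_mul_assoc, one_mul]
      have h2 : (-γ * CliffordAlgebra.involute w) * γ
          = -((((-(1/48)):ℝ) * ∑ a, ∑ b, ∑ c, (f a b c)^2) • w) := by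
        have h3 : (-γ * CliffordAlgebra.involute w) * γ
            = -(γ * (CliffordAlgebra.involute w * γ)) := by noncomm_ring
        rw [h3, ← hγw, h1]
      rw [h1, h2]
      module
    rw [hkey, smul_smul,
      show (-(24 / ∑ a, ∑ b, ∑ c, (f a b c)^2))
          * ((-(1/24):ℝ) * ∑ a, ∑ b, ∑ c, (f a b c)^2) = 1 from by
        field_simp,
      one_smul]
end

section
/- In 𝒲 = U(𝔤) ⊗ Cl(𝔤), for every index a one has the anticommutator identity (1 ⊗ x_a)·𝔇 + 𝔇·(1 ⊗ x_a) = u_a ⊗ 1 + 1 ⊗ g_a. -/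
open scoped TensorProduct

/-- In `𝒲 = U(𝔤) ⊗ Cl(𝔤)`, for every index `a`:
`(1 ⊗ x_a)·𝔇 + 𝔇·(1 ⊗ x_a) = u_a ⊗ 1 + 1 ⊗ g_a`. -/
theorem dirac_anticommutator_generator
    {n : ℕ} {g : Type*} [LieRing g] [LieAlgebra ℝ g]
    -- the ad-invariant inner product, as a symmetric bilinear form
    (ip : LinearMap.BilinForm ℝ g)
    (ip_symm : ∀ v w : g, ip v w = ip w v)
    (ip_inv : ∀ v w z : g, ip ⁅v, w⁆ z + ip w ⁅v, z⁆ = 0)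
    -- an orthonormal basis
    (e : Module.Basis (Fin n) ℝ g)
    (he : ∀ a b, ip (e a) (e b) = if a = b then (1 : ℝ) else 0)
    -- the quadratic form Q(v) = ½⟨v,v⟩ and its Clifford algebra
    (Q : QuadraticForm ℝ g)
    (hQ : ∀ v, Q v = (1 / 2 : ℝ) * ip v v)
    -- structure constants
    (f : Fin n → Fin n → Fin n → ℝ)
    (hf : ∀ a b c, f a b c = ip ⁅e a, e b⁆ (e c))
    -- the Clifford generators
    (x : Fin n → CliffordAlgebra Q)
    (hx : ∀ a, x a = CliffordAlgebra.ι Q (e a))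
    -- the elements g_a = -½ ∑ f_{ars} x_r x_s
    (gc : Fin n → CliffordAlgebra Q)
    (hgc : ∀ a, gc a = (-(1 / 2 : ℝ)) • ∑ r, ∑ s, f a r s • (x r * x s))
    -- the element γ
    (γ : CliffordAlgebra Q)
    (hγ : γ = (-(1 / 6 : ℝ)) • ∑ a, ∑ b, ∑ c, f a b c • (x a * x b * x c))
    -- the generators of the universal enveloping algebra
    (u : Fin n → UniversalEnvelopingAlgebra ℝ g)
    (hu : ∀ a, u a = UniversalEnvelopingAlgebra.ι ℝ (e a))
    -- the Dirac element 𝔇 in 𝒲 = U(𝔤) ⊗ Cl(𝔤)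
    (D : UniversalEnvelopingAlgebra ℝ g ⊗[ℝ] CliffordAlgebra Q)
    (hD : D = ∑ a, u a ⊗ₜ[ℝ] x a + 1 ⊗ₜ[ℝ] γ)
    :
    ∀ a, (1 ⊗ₜ[ℝ] x a) * D + D * (1 ⊗ₜ[ℝ] x a)
      = u a ⊗ₜ[ℝ] (1 : CliffordAlgebra Q) + 1 ⊗ₜ[ℝ] gc a := by
  intro a
  classical
  -- polarization: polar Q (e r) (e s) = ip (e r) (e s)
  have hpolar : ∀ r s : Fin n, QuadraticMap.polar Q (e r) (e s) = ip (e r) (e s) := by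
    intro r s
    have hs := ip_symm (e s) (e r)
    simp only [QuadraticMap.polar, hQ, map_add, LinearMap.add_apply]
    rw [hs]; ring
  -- basic anticommutation relation
  have hac : ∀ r s : Fin n, x r * x s + x s * x r
      = ((if r = s then (1:ℝ) else 0)) • (1 : CliffordAlgebra Q) := by
    intro r s
    rw [hx, hx, CliffordAlgebra.ι_mul_ι_add_swap, hpolar, he,
      Algebra.algebraMap_eq_smul_one]
  have hac' : ∀ r s : Fin n, x r * x s
      = ((if r = s then (1:ℝ) else 0)) • (1 : CliffordAlgebra Q) - x s * x r :=
    fun r s => eq_sub_of_add_eq (hac r s)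
  have swap : ∀ (r s : Fin n) (y : CliffordAlgebra Q),
      x r * (x s * y) = ((if r = s then (1:ℝ) else 0)) • y - x s * (x r * y) := by
    intro r s y
    calc x r * (x s * y) = (x r * x s) * y := (mul_assoc _ _ _).symm
    _ = (((if r = s then (1:ℝ) else 0)) • (1 : CliffordAlgebra Q) - x s * x r) * y := by
        rw [hac']
    _ = ((if r = s then (1:ℝ) else 0)) • y - x s * (x r * y) := by
        rw [sub_mul, smul_mul_assoc, one_mul, mul_assoc]
  -- triple anticommutator
  have htriple : ∀ b c d : Fin n,
      x a * (x b * (x c * x d)) + x b * (x c * (x d * x a))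
      = ((if a = b then (1:ℝ) else 0)) • (x c * x d)
        - ((if a = c then (1:ℝ) else 0)) • (x b * x d)
        + ((if a = d then (1:ℝ) else 0)) • (x b * x c) := by
    intro b c d
    rw [swap a b, swap a c, hac' a d]
    simp only [mul_sub, sub_mul, mul_smul_comm, smul_mul_assoc, mul_one]
    abel
  -- antisymmetry of structure constants
  have hf12 : ∀ p q r : Fin n, f q p r = - f p q r := by
    intro p q r
    rw [hf, hf, ← lie_skew (e p) (e q), map_neg, LinearMap.neg_apply, neg_neg]
  have hf23 : ∀ p q r : Fin n, f p r q = - f p q r := by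
    intro p q r
    have h := ip_inv (e p) (e q) (e r)
    have hs := ip_symm (e q) ⁅e p, e r⁆
    rw [hf, hf, ← hs]
    linarith
  have hfcyc : ∀ p q r : Fin n, f q r p = f p q r := by
    intro p q r
    rw [hf23 q p r, hf12 p q r]; ring
  -- the gamma anticommutator
  have hgam : x a * γ + γ * x a = gc a := by
    rw [hγ, hgc]
    have expand : x a * ((-(1 / 6 : ℝ)) • ∑ b, ∑ c, ∑ d, f b c d • (x b * x c * x d))
        + ((-(1 / 6 : ℝ)) • ∑ b, ∑ c, ∑ d, f b c d • (x b * x c * x d)) * x a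
        = (-(1 / 6 : ℝ)) • ∑ b, ∑ c, ∑ d, f b c d •
            (x a * (x b * (x c * x d)) + x b * (x c * (x d * x a))) := by
      simp only [Finset.mul_sum, Finset.sum_mul, mul_smul_comm, smul_mul_assoc,
        Finset.smul_sum, smul_add, mul_assoc]
      rw [← Finset.sum_add_distrib]
      refine Finset.sum_congr rfl fun b _ => ?_
      rw [← Finset.sum_add_distrib]
      refine Finset.sum_congr rfl fun c _ => ?_
      exact (Finset.sum_add_distrib).symm
    rw [expand]
    have step2 : ∀ b c d : Fin n, f b c d •
          (x a * (x b * (x c * x d)) + x b * (x c * (x d * x a)))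
        = (if a = b then f b c d • (x c * x d) else 0)
          - (if a = c then f b c d • (x b * x d) else 0)
          + (if a = d then f b c d • (x b * x c) else 0) := by
      intro b c d
      rw [htriple b c d]
      simp only [smul_sub, smul_add, smul_ite, smul_zero, one_smul, smul_smul,
        mul_ite, mul_one, mul_zero, ite_smul, zero_smul]
    simp only [step2]
    simp only [Finset.sum_add_distrib, Finset.sum_sub_distrib]
    have TA : (∑ b, ∑ c, ∑ d, if a = b then f b c d • (x c * x d) else 0)
        = ∑ c, ∑ d, f a c d • (x c * x d) := by
      rw [Fintype.sum_eq_single a]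
      · simp
      · intro b hb
        simp [Ne.symm hb]
    have TB : (∑ b, ∑ c, ∑ d, if a = c then f b c d • (x b * x d) else 0)
        = ∑ b, ∑ d, f b a d • (x b * x d) := by
      refine Finset.sum_congr rfl fun b _ => ?_
      rw [Fintype.sum_eq_single a]
      · simp
      · intro c hc
        simp [Ne.symm hc]
    have TC : (∑ b, ∑ c, ∑ d, if a = d then f b c d • (x b * x c) else 0)
        = ∑ b, ∑ c, f b c a • (x b * x c) := by
      refine Finset.sum_congr rfl fun b _ => Finset.sum_congr rfl fun c _ => ?_
      rw [Fintype.sum_eq_single a]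
      · simp
      · intro d hd
        simp [Ne.symm hd]
    rw [TA, TB, TC]
    have TB' : (∑ b, ∑ d, f b a d • (x b * x d))
        = - ∑ b, ∑ d, f a b d • (x b * x d) := by
      rw [← Finset.sum_neg_distrib]
      refine Finset.sum_congr rfl fun b _ => ?_
      rw [← Finset.sum_neg_distrib]
      refine Finset.sum_congr rfl fun d _ => ?_
      rw [hf12 a b d, neg_smul]
    have TC' : (∑ b, ∑ c, f b c a • (x b * x c))
        = ∑ b, ∑ c, f a b c • (x b * x c) := by
      refine Finset.sum_congr rfl fun b _ => Finset.sum_congr rfl fun c _ => ?_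
      rw [hfcyc a b c]
    rw [TB', TC']
    set S := ∑ r, ∑ s, f a r s • (x r * x s) with hS
    module
  -- the main computation
  rw [hD]
  have expand2 :
      (1 ⊗ₜ[ℝ] x a) * (∑ b, u b ⊗ₜ[ℝ] x b + 1 ⊗ₜ[ℝ] γ)
        + (∑ b, u b ⊗ₜ[ℝ] x b + 1 ⊗ₜ[ℝ] γ) * (1 ⊗ₜ[ℝ] x a)
      = ∑ b, u b ⊗ₜ[ℝ] (x a * x b + x b * x a)
        + 1 ⊗ₜ[ℝ] (x a * γ + γ * x a) := by
    simp only [mul_add, add_mul, Finset.mul_sum, Finset.sum_mul,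
      Algebra.TensorProduct.tmul_mul_tmul, one_mul, mul_one,
      TensorProduct.tmul_add]
    rw [Finset.sum_add_distrib]
    abel
  rw [expand2, hgam]
  congr 1
  have : ∀ b : Fin n, u b ⊗ₜ[ℝ] (x a * x b + x b * x a)
      = (if a = b then (1:ℝ) else 0) • (u b ⊗ₜ[ℝ] (1 : CliffordAlgebra Q)) := by
    intro b
    rw [hac, TensorProduct.tmul_smul]
  simp only [this, ite_smul, one_smul, zero_smul]
  rw [Fintype.sum_eq_single a]
  · simp
  · intro b hb
    simp [Ne.symm hb]
end
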